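/- arXiv:math/0608128 — 9 statements merged into one kernel-verified Lean document; each statement's English description precedes it below -/
import Mathlib

section
/- Let H be a complex Hilbert space, B its open unit ball, τ ∈ H a unit vector, and f : B → H a ρ-monotone mapping such that the strong limit lim_{r→1⁻} f(rτ) = 0. If limsup_{r→1⁻} Re⟨f(rτ), τ⟩/(r−1) > −∞, then for every x ∈ B one has 2 Re⟨f(x), x*⟩ ≥ limsup_{r→1⁻} Re⟨f(rτ), τ⟩/(r−1); in particular inf_{x∈B} 2 Re⟨f(x), x*⟩ > −∞. -/
open Filter Metric Topology

/-- The normalized support functional `x* = x/(1-‖x‖²) - τ/(1-⟨τ,x⟩)`,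
where the inner ℂ product `⟨·,·⟩` of the paper is linear in the first variable,
i.e. `⟨a,b⟩ = inner ℂ b a` in Mathlib's convention. -/
noncomputable def xstar {H : Type*} [NormedAddCommGroup H] [InnerProductSpace ℂ H]
    (τ x : H) : H :=
  ((1 - (‖x‖ : ℂ) ^ 2)⁻¹) • x - ((1 - (inner ℂ x τ : ℂ))⁻¹) • τ

/-- `f` is hyperbolically monotone (ρ-monotone) on the open unit ball:
`Re[⟨f(x),x⟩/(1-‖x‖²) + ⟨y,f(y)⟩/(1-‖y‖²)] ≥ Re[(⟨f(x),y⟩+⟨x,f(y)⟩)/(1-⟨x,y⟩)]`,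
with the paper's inner ℂ product (linear in the first variable). -/
def RhoMonotone {H : Type*} [NormedAddCommGroup H] [InnerProductSpace ℂ H]
    (f : H → H) : Prop :=
  ∀ x ∈ ball (0 : H) 1, ∀ y ∈ ball (0 : H) 1,
    (((inner ℂ y (f x) : ℂ) + (inner ℂ (f y) x : ℂ)) / (1 - (inner ℂ y x : ℂ))).re ≤
      ((inner ℂ x (f x) : ℂ) / (1 - (‖x‖ : ℂ) ^ 2)
        + (inner ℂ (f y) y : ℂ) / (1 - (‖y‖ : ℂ) ^ 2)).re

theorem stmt0 {H : Type*} [NormedAddCommGroup H] [InnerProductSpace ℂ H] [CompleteSpace H]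
    (τ : H) (hτ : ‖τ‖ = 1) (f : H → H)
    (hmono : RhoMonotone f)
    (hlim : Tendsto (fun r : ℝ => f ((r : ℂ) • τ)) (𝓝[<] (1 : ℝ)) (𝓝 (0 : H)))
    (hlimsup : ⊥ < limsup (fun r : ℝ =>
        (((inner ℂ τ (f ((r : ℂ) • τ)) : ℂ).re / (r - 1) : ℝ) : EReal)) (𝓝[<] (1 : ℝ))) :
    (∀ x ∈ ball (0 : H) 1,
        limsup (fun r : ℝ =>
            (((inner ℂ τ (f ((r : ℂ) • τ)) : ℂ).re / (r - 1) : ℝ) : EReal)) (𝓝[<] (1 : ℝ)) ≤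
          ((2 * (inner ℂ (xstar τ x) (f x) : ℂ).re : ℝ) : EReal)) ∧
      ⊥ < ⨅ x ∈ ball (0 : H) 1,
        ((2 * (inner ℂ (xstar τ x) (f x) : ℂ).re : ℝ) : EReal) := by
  have main : ∀ x ∈ ball (0 : H) 1,
      limsup (fun r : ℝ =>
          (((inner ℂ τ (f ((r : ℂ) • τ)) : ℂ).re / (r - 1) : ℝ) : EReal)) (𝓝[<] (1 : ℝ)) ≤
        ((2 * (inner ℂ (xstar τ x) (f x) : ℂ).re : ℝ) : EReal) := by
    intro x hxball
    have hx : ‖x‖ < 1 := by simpa [mem_ball, dist_zero_right] using hxball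
    set a : ℂ := inner ℂ τ (f x) with ha
    set b : ℂ := inner ℂ x (f x) with hb
    set c : ℂ := inner ℂ τ x with hc
    have hcx : ‖c‖ < 1 := by
      calc ‖c‖ ≤ ‖τ‖ * ‖x‖ := norm_inner_le_norm (𝕜 := ℂ) τ x
        _ = ‖x‖ := by rw [hτ, one_mul]
        _ < 1 := hx
    have hden : (1 : ℂ) - c ≠ 0 := by
      intro h0
      have : (1 : ℂ) = c := by linear_combination h0
      rw [← this] at hcx
      simp at hcx
    set C : ℝ := (b / (1 - (‖x‖ : ℂ) ^ 2)).re with hC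
    set g : ℝ → ℝ := fun r => (inner ℂ τ (f ((r : ℂ) • τ)) : ℂ).re / (r - 1) with hg
    set hfun : ℝ → ℝ := fun r =>
      ((1 + r) / r) *
        (C - (((r : ℂ) * a + (inner ℂ (f ((r : ℂ) • τ)) x : ℂ)) / (1 - (r : ℂ) * c)).re) with hh
    -- the pointwise inequality coming from ρ-monotonicity
    have hev : ∀ᶠ r in 𝓝[<] (1 : ℝ), g r ≤ hfun r := by
      filter_upwards [Ioo_mem_nhdsLT_of_mem
        (show (1:ℝ) ∈ Set.Ioc (0:ℝ) 1 by norm_num)] with r hr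
      obtain ⟨hr0, hr1⟩ := hr
      set y : H := (r : ℂ) • τ with hy
      have hny : ‖y‖ = r := by
        rw [hy, norm_smul, hτ, mul_one, Complex.norm_real, Real.norm_eq_abs, abs_of_pos hr0]
      have hyball : y ∈ ball (0 : H) 1 := by
        simpa [mem_ball, dist_zero_right, hny] using hr1
      have mono := hmono x hxball y hyball
      rw [hy] at mono
      rw [inner_smul_left, inner_smul_left, inner_smul_right, Complex.conj_ofReal, ← hy,
        hny] at mono
      -- rewrite the right-hand side
      have hrs : (1:ℂ) - (r:ℂ)^2 = ((1 - r^2 : ℝ) : ℂ) := by push_cast; ring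
      have key : (((r : ℂ) * a + (inner ℂ (f y) x : ℂ)) / (1 - (r : ℂ) * c)).re ≤
          C + r * (inner ℂ τ (f y) : ℂ).re / (1 - r^2) := by
        rw [← ha, ← hb, ← hc] at mono
        refine le_trans mono (le_of_eq ?_)
        rw [Complex.add_re, hrs, Complex.div_ofReal_re]
        have h1 : ((r:ℂ) * (inner ℂ (f y) τ : ℂ)).re = r * (inner ℂ (f y) τ : ℂ).re := by
          simp
        have h2 : ((inner ℂ (f y) τ : ℂ)).re = ((inner ℂ τ (f y) : ℂ)).re := by
          simpa using inner_re_symm (𝕜 := ℂ) (f y) τ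
        rw [h1, h2, hC, mul_div_assoc]
      set d : ℝ := (inner ℂ τ (f y) : ℂ).re with hd
      set LH : ℝ := (((r : ℂ) * a + (inner ℂ (f y) x : ℂ)) / (1 - (r : ℂ) * c)).re with hLH
      have h1 : (0:ℝ) < 1 - r^2 := by nlinarith
      have ineq' : (LH - C) * (1 - r^2) ≤ r * d := by
        have : LH - C ≤ r * d / (1 - r^2) := by linarith [key]
        calc (LH - C) * (1 - r^2) ≤ (r * d / (1 - r^2)) * (1 - r^2) := by
              exact mul_le_mul_of_nonneg_right this (le_of_lt h1)
          _ = r * d := by field_simp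
      show d / (r - 1) ≤ ((1 + r) / r) * (C - LH)
      rw [div_le_iff_of_neg (by linarith : r - 1 < 0), div_mul_eq_mul_div,
        div_mul_eq_mul_div, div_le_iff₀ hr0]
      nlinarith [ineq']
    -- the limit of hfun
    have tr : Tendsto (fun r : ℝ => ((r : ℝ) : ℂ)) (𝓝[<] (1 : ℝ)) (𝓝 1) := by
      have := (Complex.continuous_ofReal.tendsto 1).mono_left
        (nhdsWithin_le_nhds (s := Set.Iio (1:ℝ)))
      simpa using this
    have tinner : Tendsto (fun r : ℝ => (inner ℂ (f ((r : ℂ) • τ)) x : ℂ)) (𝓝[<] (1 : ℝ))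
        (𝓝 0) := by
      have := Filter.Tendsto.inner (𝕜 := ℂ) hlim (tendsto_const_nhds (x := x))
      simpa using this
    have tnum : Tendsto (fun r : ℝ => (r : ℂ) * a + (inner ℂ (f ((r : ℂ) • τ)) x : ℂ))
        (𝓝[<] (1 : ℝ)) (𝓝 a) := by
      have := (tr.mul (tendsto_const_nhds (x := a))).add tinner
      simpa using this
    have tden : Tendsto (fun r : ℝ => (1 : ℂ) - (r : ℂ) * c) (𝓝[<] (1 : ℝ)) (𝓝 (1 - c)) := by
      have := (tendsto_const_nhds (x := (1:ℂ))).sub (tr.mul (tendsto_const_nhds (x := c)))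
      simpa using this
    have tfrac : Tendsto (fun r : ℝ =>
        (((r : ℂ) * a + (inner ℂ (f ((r : ℂ) • τ)) x : ℂ)) / (1 - (r : ℂ) * c)).re)
        (𝓝[<] (1 : ℝ)) (𝓝 ((a / (1 - c)).re)) :=
      (Complex.continuous_re.tendsto _).comp (tnum.div tden hden)
    have t1 : Tendsto (fun r : ℝ => (1 + r) / r) (𝓝[<] (1 : ℝ)) (𝓝 2) := by
      have : Tendsto (fun r : ℝ => (1 + r) / r) (𝓝 (1:ℝ)) (𝓝 ((1 + 1) / 1)) :=
        (tendsto_const_nhds.add tendsto_id).div tendsto_id one_ne_zero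
      have := this.mono_left (nhdsWithin_le_nhds (s := Set.Iio (1:ℝ)))
      norm_num at this
      exact this
    have hT : Tendsto hfun (𝓝[<] (1 : ℝ)) (𝓝 (2 * (C - (a / (1 - c)).re))) :=
      t1.mul ((tendsto_const_nhds (x := C)).sub tfrac)
    -- identification of the limit with the statement's quantity
    have hxstar : (inner ℂ (xstar τ x) (f x) : ℂ) = b / (1 - (‖x‖ : ℂ) ^ 2) - a / (1 - c) := by
      simp only [xstar, inner_sub_left, inner_smul_left, map_inv₀, map_sub, map_one, map_pow,
        Complex.conj_ofReal, inner_conj_symm, ← ha, ← hb, ← hc, div_eq_inv_mul]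
    have hTval : 2 * (C - (a / (1 - c)).re) = 2 * (inner ℂ (xstar τ x) (f x) : ℂ).re := by
      rw [hxstar, Complex.sub_re, hC]
    calc limsup (fun r : ℝ =>
            (((inner ℂ τ (f ((r : ℂ) • τ)) : ℂ).re / (r - 1) : ℝ) : EReal)) (𝓝[<] (1 : ℝ))
        ≤ limsup (fun r : ℝ => ((hfun r : ℝ) : EReal)) (𝓝[<] (1 : ℝ)) := by
          apply limsup_le_limsup
          · filter_upwards [hev] with r hr using EReal.coe_le_coe_iff.mpr hr
          · isBoundedDefault
          · isBoundedDefault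
      _ = ((2 * (C - (a / (1 - c)).re) : ℝ) : EReal) :=
          ((continuous_coe_real_ereal.tendsto _).comp hT).limsup_eq
      _ = ((2 * (inner ℂ (xstar τ x) (f x) : ℂ).re : ℝ) : EReal) := by rw [hTval]
  exact ⟨main, lt_of_lt_of_le hlimsup (le_iInf fun x => le_iInf fun hx => main x hx)⟩
end

section
/- Let H be a complex Hilbert space, B its open unit ball, τ ∈ H a unit vector, f : B → H a mapping, and β ∈ ℝ. If 2 Re⟨f(x), x*⟩ ≥ β for all x ∈ B, then liminf_{r→1⁻} Re⟨f(rτ), τ⟩/(r−1) ≥ β. -/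
open Filter Metric Topology

theorem stmt1 {H : Type*} [NormedAddCommGroup H] [InnerProductSpace ℂ H] [CompleteSpace H]
    (τ : H) (hτ : ‖τ‖ = 1) (f : H → H) (β : ℝ)
    (hβ : ∀ x ∈ ball (0 : H) 1, β ≤ 2 * (inner ℂ (xstar τ x) (f x) : ℂ).re) :
    (β : EReal) ≤ liminf (fun r : ℝ =>
        (((inner ℂ τ (f ((r : ℂ) • τ)) : ℂ).re / (r - 1) : ℝ) : EReal)) (𝓝[<] (1 : ℝ)) := by
  have hmem : Set.Ioo (0:ℝ) 1 ∈ 𝓝[<] (1:ℝ) :=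
    Ioo_mem_nhdsLT_of_mem (by constructor <;> norm_num)
  have key : ∀ᶠ r in 𝓝[<] (1:ℝ),
      ((β*(1+r)/2 : ℝ) : EReal) ≤
        (((inner ℂ τ (f ((r:ℂ)•τ)) : ℂ).re / (r-1) : ℝ) : EReal) := by
    filter_upwards [hmem] with r hr
    obtain ⟨hr0, hr1⟩ := hr
    have hx : (r:ℂ)•τ ∈ ball (0:H) 1 := by
      simp [mem_ball, norm_smul, hτ, Complex.norm_real, abs_of_pos hr0, hr1]
    have hβ' := hβ _ hx
    have hne1 : (1:ℂ) - (r:ℂ) ≠ 0 := by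
      intro h
      have : (r:ℂ) = 1 := by linear_combination -h
      have : r = 1 := by exact_mod_cast this
      linarith
    have hne2 : (1:ℂ) + (r:ℂ) ≠ 0 := by
      intro h
      have : (r:ℂ) = -1 := by linear_combination h
      have : r = -1 := by exact_mod_cast this
      linarith
    have hxs : xstar τ ((r:ℂ)•τ) = ((-(1-r^2)⁻¹ : ℝ) : ℂ) • τ := by
      unfold xstar
      have h1 : ‖(r:ℂ)•τ‖ = r := by
        simp [norm_smul, hτ, Complex.norm_real, abs_of_pos hr0]
      have hne3 : (1:ℂ) - (r:ℂ)^2 ≠ 0 := by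
        intro h
        apply hne1
        have : ((1:ℂ)-(r:ℂ))*((1:ℂ)+(r:ℂ)) = 0 := by linear_combination h
        rcases mul_eq_zero.mp this with h' | h'
        · exact h'
        · exact absurd h' hne2
      have h2 : (inner ℂ ((r:ℂ)•τ) τ : ℂ) = (r:ℂ) := by
        rw [inner_smul_left, inner_self_eq_norm_sq_to_K, hτ]
        simp [Complex.conj_ofReal]
      rw [h1, h2, smul_smul, ← sub_smul]
      congr 1
      push_cast
      field_simp
      ring
    rw [hxs, inner_smul_left, Complex.conj_ofReal] at hβ'
    have hre : ((((-(1-r^2)⁻¹ : ℝ) : ℂ)) * (inner ℂ τ (f ((r:ℂ)•τ)) : ℂ)).re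
        = (-(1-r^2)⁻¹) * (inner ℂ τ (f ((r:ℂ)•τ)) : ℂ).re := by
      exact Complex.re_ofReal_mul _ _
    rw [hre] at hβ'
    rw [EReal.coe_le_coe_iff]
    set g : ℝ := (inner ℂ τ (f ((r:ℂ)•τ)) : ℂ).re with hg
    have hden : (1:ℝ) - r^2 > 0 := by nlinarith
    have hβ'' : β * (1 - r^2) ≤ -2 * g := by
      have := mul_le_mul_of_nonneg_right hβ' (le_of_lt hden)
      have hinv : (-(1-r^2)⁻¹) * g * (1-r^2) = -g := by
        field_simp
      nlinarith [this, hinv]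
    have hr1' : r - 1 ≠ 0 := by intro h; linarith
    have hr2' : (1:ℝ) - r ≠ 0 := by intro h; linarith
    have key2 : g/(r-1) - β*(1+r)/2 = (-2*g - β*(1-r^2))/(2*(1-r)) := by
      field_simp
      ring
    have hnn : 0 ≤ (-2*g - β*(1-r^2))/(2*(1-r)) := by
      apply div_nonneg <;> linarith
    linarith [key2, hnn]
  have h1 : Tendsto (fun r:ℝ => ((β*(1+r)/2:ℝ):EReal)) (𝓝[<](1:ℝ)) (𝓝 (β:EReal)) := by
    apply (EReal.tendsto_coe).mpr
    have hc : Continuous (fun r:ℝ => β*(1+r)/2) := by continuity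
    have h2 := (hc.tendsto 1).mono_left (nhdsWithin_le_nhds (s := Set.Iio (1:ℝ)))
    convert h2 using 2
    norm_num
  calc (β:EReal) = liminf (fun r:ℝ => ((β*(1+r)/2:ℝ):EReal)) (𝓝[<](1:ℝ)) := h1.liminf_eq.symm
    _ ≤ _ := liminf_le_liminf key
end

section
/- Let H be a complex Hilbert space, B its open unit ball, τ ∈ H a unit vector, and f : B → H a ρ-monotone mapping such that the strong limit lim_{r→1⁻} f(rτ) = 0. If limsup_{r→1⁻} Re⟨f(rτ), τ⟩/(r−1) > −∞, then the limit α := lim_{r→1⁻} Re⟨f(rτ), τ⟩/(r−1) exists finitely and α = inf_{x∈B} 2 Re⟨f(x), x*⟩. -/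
open Filter Metric Topology

section Aux

variable {H : Type*} [NormedAddCommGroup H] [InnerProductSpace ℂ H]

/-- `Re ⟪x*, f x⟫ = Re⟪x,fx⟫/(1-‖x‖²) - Re(⟪τ,fx⟫/(1-⟪τ,x⟫))`. -/
lemma xstar_inner_re (τ x w : H) (hx : ‖x‖ < 1) :
    (inner ℂ (xstar τ x) w : ℂ).re
      = (inner ℂ x w : ℂ).re / (1 - ‖x‖ ^ 2)
        - ((inner ℂ τ w : ℂ) / (1 - (inner ℂ τ x : ℂ))).re := by
  have h1 : ((1 : ℂ) - (‖x‖ : ℂ) ^ 2) = ((1 - ‖x‖ ^ 2 : ℝ) : ℂ) := by push_cast; ring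
  have : (inner ℂ (xstar τ x) w : ℂ)
      = (inner ℂ x w : ℂ) / ((1 - ‖x‖ ^ 2 : ℝ) : ℂ)
        - (inner ℂ τ w : ℂ) / (1 - (inner ℂ τ x : ℂ)) := by
    rw [xstar, inner_sub_left, inner_smul_left, inner_smul_left, h1]
    rw [map_inv₀, map_inv₀, Complex.conj_ofReal, map_sub, map_one, inner_conj_symm]
    ring
  rw [this, Complex.sub_re, Complex.div_ofReal_re]

lemma norm_smul_tau (τ : H) (hτ : ‖τ‖ = 1) (r : ℝ) (hr : 0 ≤ r) :
    ‖(r : ℂ) • τ‖ = r := by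
  rw [norm_smul, Complex.norm_real, hτ, Real.norm_eq_abs, abs_of_nonneg hr, mul_one]

end Aux

theorem stmt2 {H : Type*} [NormedAddCommGroup H] [InnerProductSpace ℂ H] [CompleteSpace H]
    (τ : H) (hτ : ‖τ‖ = 1) (f : H → H)
    (hmono : RhoMonotone f)
    (hlim : Tendsto (fun r : ℝ => f ((r : ℂ) • τ)) (𝓝[<] (1 : ℝ)) (𝓝 (0 : H)))
    (hlimsup : ⊥ < limsup (fun r : ℝ =>
        (((inner ℂ τ (f ((r : ℂ) • τ)) : ℂ).re / (r - 1) : ℝ) : EReal)) (𝓝[<] (1 : ℝ))) :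
    ∃ α : ℝ,
      Tendsto (fun r : ℝ => (inner ℂ τ (f ((r : ℂ) • τ)) : ℂ).re / (r - 1))
        (𝓝[<] (1 : ℝ)) (𝓝 α) ∧
      (α : EReal) = ⨅ x ∈ ball (0 : H) 1,
        ((2 * (inner ℂ (xstar τ x) (f x) : ℂ).re : ℝ) : EReal) := by
  set g : ℝ → ℝ := fun r => (inner ℂ τ (f ((r : ℂ) • τ)) : ℂ).re / (r - 1) with hg
  set F : H → ℝ := fun x => 2 * (inner ℂ (xstar τ x) (f x) : ℂ).re with hF
  set l : Filter ℝ := 𝓝[<] (1 : ℝ) with hl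
  have hIoo : Set.Ioo (0 : ℝ) 1 ∈ l := Ioo_mem_nhdsLT_of_mem (by constructor <;> norm_num)
  -- membership of rτ in the ball
  have hmem : ∀ r : ℝ, 0 ≤ r → r < 1 → (r : ℂ) • τ ∈ ball (0 : H) 1 := by
    intro r h0 h1
    rw [mem_ball, dist_zero_right, norm_smul_tau τ hτ r h0]
    exact h1
  -- Step 1: limsup (g : EReal) ≤ F x for every x in the ball
  have step1 : ∀ x ∈ ball (0 : H) 1,
      limsup (fun r : ℝ => ((g r : ℝ) : EReal)) l ≤ ((F x : ℝ) : EReal) := by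
    intro x hx
    have hxn : ‖x‖ < 1 := by simpa [mem_ball, dist_eq_norm] using hx
    set u : ℂ := inner ℂ τ (f x) with hu
    set v : ℂ := inner ℂ τ x with hv
    set A : ℂ := inner ℂ x (f x) with hA
    have hvlt : ‖v‖ < 1 := by
      calc ‖v‖ ≤ ‖τ‖ * ‖x‖ := norm_inner_le_norm τ x
        _ = ‖x‖ := by rw [hτ, one_mul]
        _ < 1 := hxn
    set C : ℝ → ℝ := fun r =>
      A.re / (1 - ‖x‖ ^ 2)
        - ((((r : ℂ) * u + (inner ℂ (f ((r : ℂ) • τ)) x : ℂ)) / (1 - (r : ℂ) * v)).re)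
      with hC
    -- the pointwise inequality from monotonicity
    have key : ∀ r : ℝ, 0 < r → r < 1 → g r ≤ (1 + r) / r * C r := by
      intro r hr0 hr1
      have hmono' := hmono x hx ((r : ℂ) • τ) (hmem r hr0.le hr1)
      set w : H := f ((r : ℂ) • τ) with hw
      have e1 : (inner ℂ ((r : ℂ) • τ) (f x) : ℂ) = (r : ℂ) * u := by
        rw [hu, inner_smul_left, Complex.conj_ofReal]
      have e2 : (inner ℂ (w) ((r : ℂ) • τ) : ℂ) = (r : ℂ) * (inner ℂ w τ : ℂ) := by
        rw [inner_smul_right]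
      have e3 : (inner ℂ ((r : ℂ) • τ) x : ℂ) = (r : ℂ) * v := by
        rw [hv, inner_smul_left, Complex.conj_ofReal]
      have e4 : ‖(r : ℂ) • τ‖ = r := norm_smul_tau τ hτ r hr0.le
      rw [e1, e2, e3, e4] at hmono'
      -- rewrite the RHS real parts
      have h1c : ((1 : ℂ) - (‖x‖ : ℂ) ^ 2) = ((1 - ‖x‖ ^ 2 : ℝ) : ℂ) := by push_cast; ring
      have h2c : ((1 : ℂ) - (r : ℂ) ^ 2) = ((1 - r ^ 2 : ℝ) : ℂ) := by push_cast; ring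
      rw [Complex.add_re, h1c, h2c, Complex.div_ofReal_re] at hmono'
      have h3 : ((r : ℂ) * (inner ℂ w τ : ℂ) / ((1 - r ^ 2 : ℝ) : ℂ)).re
          = r * (inner ℂ w τ : ℂ).re / (1 - r ^ 2) := by
        rw [Complex.div_ofReal_re]
        congr 1
        have : ((r : ℂ) * (inner ℂ w τ : ℂ)).re = r * (inner ℂ w τ : ℂ).re := by
          simp [Complex.mul_re]
        exact this
      rw [h3] at hmono'
      have h4 : (inner ℂ w τ : ℂ).re = (inner ℂ τ w : ℂ).re := by
        rw [← inner_conj_symm τ w, Complex.conj_re]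
      rw [h4] at hmono'
      -- now hmono' : D.re ≤ A.re/(1-‖x‖²) + r * a / (1-r²)
      set a : ℝ := (inner ℂ τ w : ℂ).re with ha
      set D : ℝ := (((r : ℂ) * u + (inner ℂ w x : ℂ)) / (1 - (r : ℂ) * v)).re with hD
      have hCr : C r = A.re / (1 - ‖x‖ ^ 2) - D := rfl
      have hgr : g r = a / (r - 1) := rfl
      have hr2 : (0:ℝ) < 1 - r ^ 2 := by nlinarith
      have h5 : r * g r / (1 + r) ≤ C r := by
        rw [hgr, hCr]
        have hne1 : r - 1 ≠ 0 := by linarith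
        have hne2 : (1:ℝ) + r ≠ 0 := by linarith
        have : r * (a / (r - 1)) / (1 + r) = -(r * a / (1 - r ^ 2)) := by
          field_simp
          ring
        rw [this]
        linarith
      have hpos : (0:ℝ) < (1 + r) / r := by positivity
      calc g r = (1 + r) / r * (r * g r / (1 + r)) := by
            field_simp
        _ ≤ (1 + r) / r * C r := by
            exact mul_le_mul_of_nonneg_left h5 hpos.le
    -- the limit of the bound
    have hvne : (1 : ℂ) - v ≠ 0 := by
      intro h
      have : v = 1 := by linear_combination -h
      rw [this] at hvlt
      norm_num at hvlt
    have t1 : Tendsto (fun r : ℝ => (1 + r) / r) l (𝓝 2) := by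
      have : Tendsto (fun r : ℝ => (1 + r) / r) (𝓝 (1:ℝ)) (𝓝 ((1+1)/1)) := by
        apply Tendsto.div
        · exact (continuous_const.add continuous_id).tendsto 1
        · exact continuous_id.tendsto 1
        · norm_num
      norm_num at this
      exact this.mono_left nhdsWithin_le_nhds
    have t2 : Tendsto (fun r : ℝ => ((r : ℂ) * u + (inner ℂ (f ((r : ℂ) • τ)) x : ℂ)))
        l (𝓝 (u + 0)) := by
      apply Tendsto.add
      · have : Tendsto (fun r : ℝ => ((r : ℂ) * u)) (𝓝 (1:ℝ)) (𝓝 ((1:ℂ) * u)) := by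
          exact (Complex.continuous_ofReal.tendsto 1).mul tendsto_const_nhds
        rw [one_mul] at this
        exact this.mono_left nhdsWithin_le_nhds
      · have h8 : Tendsto (fun r : ℝ => (inner ℂ (f ((r : ℂ) • τ)) x : ℂ)) l
            (𝓝 (inner ℂ (0 : H) x : ℂ)) := hlim.inner tendsto_const_nhds
        simpa [inner_zero_left] using h8
    have t3 : Tendsto (fun r : ℝ => ((1 : ℂ) - (r : ℂ) * v)) l (𝓝 (1 - v)) := by
      have : Tendsto (fun r : ℝ => ((1 : ℂ) - (r : ℂ) * v)) (𝓝 (1:ℝ))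
          (𝓝 (1 - (1:ℂ) * v)) :=
        tendsto_const_nhds.sub ((Complex.continuous_ofReal.tendsto 1).mul tendsto_const_nhds)
      rw [one_mul] at this
      exact this.mono_left nhdsWithin_le_nhds
    have t4 : Tendsto (fun r : ℝ => C r) l
        (𝓝 (A.re / (1 - ‖x‖ ^ 2) - (u / (1 - v)).re)) := by
      apply Tendsto.sub tendsto_const_nhds
      have := (t2.div t3 hvne)
      rw [add_zero] at this
      exact (Complex.continuous_re.tendsto _).comp this
    have t5 : Tendsto (fun r : ℝ => (1 + r) / r * C r) l (𝓝 (F x)) := by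
      have hFx : F x = 2 * (A.re / (1 - ‖x‖ ^ 2) - (u / (1 - v)).re) := by
        show 2 * (inner ℂ (xstar τ x) (f x) : ℂ).re = _
        rw [xstar_inner_re τ x (f x) hxn]
      rw [hFx]
      exact t1.mul t4
    -- conclude via limsup
    have hev : ∀ᶠ r in l, ((g r : ℝ) : EReal) ≤ (((1 + r) / r * C r : ℝ) : EReal) := by
      filter_upwards [hIoo] with r hr
      exact_mod_cast EReal.coe_le_coe_iff.2 (key r hr.1 hr.2)
    calc limsup (fun r : ℝ => ((g r : ℝ) : EReal)) l
        ≤ limsup (fun r : ℝ => (((1 + r) / r * C r : ℝ) : EReal)) l :=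
          limsup_le_limsup hev
      _ = ((F x : ℝ) : EReal) := (EReal.tendsto_coe.2 t5).limsup_eq
  -- the infimum
  set I : EReal := ⨅ x ∈ ball (0 : H) 1, ((F x : ℝ) : EReal) with hI
  have hLI : limsup (fun r : ℝ => ((g r : ℝ) : EReal)) l ≤ I :=
    le_iInf₂ fun x hx => step1 x hx
  have hIbot : (⊥ : EReal) < I := lt_of_lt_of_le hlimsup hLI
  have hItop : I < ⊤ := by
    refine lt_of_le_of_lt (iInf₂_le (0 : H) (by simp [mem_ball])) ?_
    exact EReal.coe_lt_top _
  set β : ℝ := I.toReal with hβ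
  have hIβ : I = (β : EReal) := (EReal.coe_toReal hItop.ne hIbot.ne').symm
  -- F (sτ) = -2 a(s)/(1-s²)
  have hFs : ∀ s : ℝ, 0 < s → s < 1 →
      F ((s : ℂ) • τ) = -2 * (inner ℂ τ (f ((s : ℂ) • τ)) : ℂ).re / (1 - s ^ 2) := by
    intro s h0 h1
    have hsn : ‖(s : ℂ) • τ‖ < 1 := by rw [norm_smul_tau τ hτ s h0.le]; exact h1
    have hre := xstar_inner_re τ ((s : ℂ) • τ) (f ((s : ℂ) • τ)) hsn
    set w : H := f ((s : ℂ) • τ) with hw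
    have e1 : (inner ℂ ((s : ℂ) • τ) w : ℂ) = (s : ℂ) * (inner ℂ τ w : ℂ) := by
      rw [inner_smul_left, Complex.conj_ofReal]
    have e2 : (inner ℂ τ ((s : ℂ) • τ) : ℂ) = (s : ℂ) := by
      rw [inner_smul_right, inner_self_eq_norm_sq_to_K, hτ]
      norm_num
    have e3 : ‖(s : ℂ) • τ‖ = s := norm_smul_tau τ hτ s h0.le
    rw [e1, e2, e3] at hre
    have e4 : ((s : ℂ) * (inner ℂ τ w : ℂ)).re = s * (inner ℂ τ w : ℂ).re := by
      simp [Complex.mul_re]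
    have e5 : ((1 : ℂ) - (s : ℂ)) = ((1 - s : ℝ) : ℂ) := by push_cast; ring
    rw [e4, e5, Complex.div_ofReal_re] at hre
    show 2 * (inner ℂ (xstar τ ((s : ℂ) • τ)) (f ((s : ℂ) • τ)) : ℂ).re = _
    rw [← hw, hre]
    have hne1 : (1:ℝ) - s ^ 2 ≠ 0 := by nlinarith
    have hne2 : (1:ℝ) - s ≠ 0 := by nlinarith
    field_simp
    ring
  -- Step 2: β(1+s)/2 ≤ g s for s ∈ (0,1)
  have step2 : ∀ s : ℝ, 0 < s → s < 1 → β * (1 + s) / 2 ≤ g s := by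
    intro s h0 h1
    have hle : I ≤ ((F ((s : ℂ) • τ) : ℝ) : EReal) :=
      iInf₂_le ((s : ℂ) • τ) (hmem s h0.le h1)
    rw [hIβ] at hle
    have hle' : β ≤ F ((s : ℂ) • τ) := EReal.coe_le_coe_iff.1 hle
    rw [hFs s h0 h1] at hle'
    set a : ℝ := (inner ℂ τ (f ((s : ℂ) • τ)) : ℂ).re with ha
    have hgr : g s = a / (s - 1) := rfl
    rw [hgr]
    have hs2 : (0:ℝ) < 1 - s ^ 2 := by nlinarith
    have hs1 : s - 1 < 0 := by linarith
    -- β ≤ -2a/(1-s²)  ⟹  a/(s-1) ≥ β(1+s)/2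
    have h6 : β * (1 - s ^ 2) ≤ -2 * a := (le_div_iff₀ hs2).1 hle'
    rw [le_div_iff_of_neg hs1]
    nlinarith [h6]
  -- liminf bound
  have hliminf : ((β : ℝ) : EReal) ≤ liminf (fun r : ℝ => ((g r : ℝ) : EReal)) l := by
    have hev : ∀ᶠ s in l, ((β * (1 + s) / 2 : ℝ) : EReal) ≤ ((g s : ℝ) : EReal) := by
      filter_upwards [hIoo] with s hs
      exact EReal.coe_le_coe_iff.2 (step2 s hs.1 hs.2)
    have t6 : Tendsto (fun s : ℝ => ((β * (1 + s) / 2 : ℝ) : EReal)) l (𝓝 ((β : ℝ) : EReal)) := by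
      rw [EReal.tendsto_coe]
      have : Tendsto (fun s : ℝ => β * (1 + s) / 2) (𝓝 (1:ℝ)) (𝓝 (β * (1 + 1) / 2)) := by
        apply Tendsto.div_const
        exact tendsto_const_nhds.mul (tendsto_const_nhds.add tendsto_id)
      have h2 : β * (1 + 1) / 2 = β := by ring
      rw [h2] at this
      exact this.mono_left nhdsWithin_le_nhds
    calc ((β : ℝ) : EReal) = liminf (fun s : ℝ => ((β * (1 + s) / 2 : ℝ) : EReal)) l :=
          (t6.liminf_eq).symm
      _ ≤ liminf (fun r : ℝ => ((g r : ℝ) : EReal)) l := liminf_le_liminf hev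
  -- conclude
  have hls : limsup (fun r : ℝ => ((g r : ℝ) : EReal)) l ≤ ((β : ℝ) : EReal) := hIβ ▸ hLI
  have hsandwich1 : liminf (fun r : ℝ => ((g r : ℝ) : EReal)) l = ((β : ℝ) : EReal) :=
    le_antisymm (le_trans (liminf_le_limsup) hls) hliminf
  have hsandwich2 : limsup (fun r : ℝ => ((g r : ℝ) : EReal)) l = ((β : ℝ) : EReal) :=
    le_antisymm hls (hsandwich1 ▸ liminf_le_limsup)
  have htend : Tendsto (fun r : ℝ => ((g r : ℝ) : EReal)) l (𝓝 ((β : ℝ) : EReal)) :=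
    tendsto_of_liminf_eq_limsup hsandwich1 hsandwich2
  exact ⟨β, EReal.tendsto_coe.1 htend, hIβ ▸ rfl⟩
end

section
/- Let H be a complex Hilbert space, B its open unit ball, τ ∈ H a unit vector, f : B → H a mapping, and {F_t}_{t≥0} a flow on B generated by f. Then for every x ∈ B the function ψ(t) := d_τ(F_t(x)) is differentiable on [0,∞) and satisfies ψ'(t) = −2 ψ(t) · Re⟨f(F_t(x)), (F_t(x))*⟩ for all t ≥ 0; in particular ψ'(0) = −2 d_τ(x) · Re⟨f(x), x*⟩. -/
open Filter Metric Topology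

/-- The non-Euclidean "distance" `d_τ(x) = |1 - ⟨x,τ⟩|² / (1 - ‖x‖²)`
(paper's inner product, linear in the first variable: `⟨x,τ⟩ = inner τ x`). -/
noncomputable def dtau {H : Type*} [NormedAddCommGroup H] [InnerProductSpace ℂ H]
    (τ x : H) : ℝ :=
  ‖(1 : ℂ) - (inner ℂ τ x : ℂ)‖ ^ 2 / (1 - ‖x‖ ^ 2)

open ComplexConjugate in
/-- Key computation: along any curve `c` with derivative `-w` at `t`, staying value in the ball,
the function `s ↦ dtau τ (c s)` has derivative `-2 * dtau τ (c t) * Re ⟪(c t)*, w⟫`. -/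
lemma dtau_hasDerivWithinAt {H : Type*} [NormedAddCommGroup H] [InnerProductSpace ℂ H]
    (τ : H) (hτ : ‖τ‖ = 1) (c : ℝ → H) (w : H) (s : Set ℝ) (t : ℝ)
    (hy : ‖c t‖ < 1) (hc : HasDerivWithinAt c (-w) s t) :
    HasDerivWithinAt (fun s => dtau τ (c s))
      (-2 * dtau τ (c t) * (inner ℂ (xstar τ (c t)) w : ℂ).re) s t := by
  letI : InnerProductSpace ℝ H := InnerProductSpace.rclikeToReal ℂ H
  set y := c t with hyt
  set g0 : ℂ := (1:ℂ) - inner ℂ τ y with hg0def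
  have hb : (0:ℝ) < 1 - ‖y‖^2 := by nlinarith [norm_nonneg y]
  have hg0 : g0 ≠ 0 := by
    have h1 : ‖(inner ℂ τ y : ℂ)‖ < 1 := by
      calc ‖(inner ℂ τ y : ℂ)‖ ≤ ‖τ‖ * ‖y‖ := norm_inner_le_norm τ y
        _ = ‖y‖ := by rw [hτ, one_mul]
        _ < 1 := hy
    intro h
    rw [(sub_eq_zero.mp h).symm] at h1; simp at h1
  -- derivative of the ℂ-valued function
  have hg : HasDerivWithinAt (fun s => (1:ℂ) - inner ℂ τ (c s)) (inner ℂ τ w : ℂ) s t := by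
    have h := ((innerSL ℂ τ).hasFDerivAt.restrictScalars ℝ).comp_hasDerivWithinAt t hc
    simp only [ContinuousLinearMap.coe_restrictScalars', innerSL_apply_apply, inner_neg_right] at h
    simpa using h.const_sub 1
  -- numerator derivative
  have hA : HasDerivWithinAt (fun s => ‖(1:ℂ) - inner ℂ τ (c s)‖^2)
      (2 * (conj g0 * (inner ℂ τ w : ℂ)).re) s t := by
    have h := HasDerivWithinAt.norm_sq hg
    rwa [Complex.inner, mul_comm (inner ℂ τ w)] at h
  -- denominator derivative
  have hB : HasDerivWithinAt (fun s => (1:ℝ) - ‖c s‖^2) (2 * (inner ℂ y w : ℂ).re) s t := by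
    have h := (HasDerivWithinAt.norm_sq hc).const_sub 1
    convert h using 1
    · rfl
    · rfl
    rw [inner_neg_right, real_inner_eq_re_inner ℂ]
    simp
    rfl
  have hD := hA.div hB hb.ne'
  simp only [dtau]
  convert hD using 1
  · rfl
  · rfl
  · rfl
  -- value computation
  have hx1 : (inner ℂ (xstar τ y) w : ℂ)
      = (((1 - ‖y‖^2 : ℝ) : ℂ))⁻¹ * inner ℂ y w - g0⁻¹ * inner ℂ τ w := by
    simp only [xstar, inner_sub_left, inner_smul_left, map_inv₀, map_sub, map_one, map_pow,
      Complex.conj_ofReal, inner_conj_symm]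
    push_cast
    rw [hg0def]
  have hkey : (conj g0 * (inner ℂ τ w : ℂ)).re = ‖g0‖^2 * (g0⁻¹ * (inner ℂ τ w : ℂ)).re := by
    have : conj g0 * (inner ℂ τ w : ℂ) = ((‖g0‖^2 : ℝ) : ℂ) * (g0⁻¹ * (inner ℂ τ w : ℂ)) := by
      rw [← mul_assoc]
      congr 1
      push_cast
      rw [← Complex.mul_conj', mul_comm g0 (conj g0), mul_assoc, mul_inv_cancel₀ hg0, mul_one]
    rw [this, Complex.re_ofReal_mul]
  rw [hx1]
  have hrecomb : ((((1 - ‖y‖^2 : ℝ) : ℂ))⁻¹ * (inner ℂ y w : ℂ) - g0⁻¹ * (inner ℂ τ w : ℂ)).re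
      = (1 - ‖y‖^2)⁻¹ * (inner ℂ y w : ℂ).re - (g0⁻¹ * (inner ℂ τ w : ℂ)).re := by
    rw [Complex.sub_re, ← Complex.ofReal_inv, Complex.re_ofReal_mul]
  rw [hrecomb, hkey, ← hg0def]
  rw [← hyt]
  field_simp
  ring

theorem stmt3 {H : Type*} [NormedAddCommGroup H] [InnerProductSpace ℂ H] [CompleteSpace H]
    (τ : H) (hτ : ‖τ‖ = 1) (f : H → H) (F : ℝ → H → H)
    (hF0 : ∀ x ∈ ball (0 : H) 1, F 0 x = x)
    (hFsemigroup : ∀ t ≥ (0 : ℝ), ∀ s ≥ (0 : ℝ), ∀ x ∈ ball (0 : H) 1,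
      F (t + s) x = F t (F s x))
    (hFmaps : ∀ t ≥ (0 : ℝ), ∀ x ∈ ball (0 : H) 1, F t x ∈ ball (0 : H) 1)
    (hFderiv : ∀ x ∈ ball (0 : H) 1, ∀ t ≥ (0 : ℝ),
      HasDerivWithinAt (fun s => F s x) (-(f (F t x))) (Set.Ici (0 : ℝ)) t) :
    ∀ x ∈ ball (0 : H) 1,
      (∀ t ≥ (0 : ℝ),
        HasDerivWithinAt (fun s => dtau τ (F s x))
          (-2 * dtau τ (F t x) * (inner ℂ (xstar τ (F t x)) (f (F t x)) : ℂ).re)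
          (Set.Ici (0 : ℝ)) t) ∧
      HasDerivWithinAt (fun s => dtau τ (F s x))
        (-2 * dtau τ x * (inner ℂ (xstar τ x) (f x) : ℂ).re)
        (Set.Ici (0 : ℝ)) 0 := by
  intro x hx
  have main : ∀ t ≥ (0 : ℝ),
      HasDerivWithinAt (fun s => dtau τ (F s x))
        (-2 * dtau τ (F t x) * (inner ℂ (xstar τ (F t x)) (f (F t x)) : ℂ).re)
        (Set.Ici (0 : ℝ)) t := by
    intro t ht
    have hball : ‖F t x‖ < 1 := mem_ball_zero_iff.mp (hFmaps t ht x hx)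
    exact dtau_hasDerivWithinAt τ hτ (fun s => F s x) (f (F t x)) _ t hball (hFderiv x hx t ht)
  refine ⟨main, ?_⟩
  have h0 := main 0 le_rfl
  rwa [hF0 x hx] at h0
end

section
/- Let H be a complex Hilbert space, B its open unit ball, τ ∈ H a unit vector, f : B → H a mapping, {F_t}_{t≥0} a flow on B generated by f, and β ∈ ℝ. If 2 Re⟨f(x), x*⟩ ≥ β for all x ∈ B, then d_τ(F_t(x)) ≤ exp(−tβ) · d_τ(x) for all x ∈ B and all t ≥ 0. -/
open Filter Metric Topology

lemma normsq_hasDeriv {E : Type*} [NormedAddCommGroup E] [InnerProductSpace ℂ E]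
    {c : ℝ → E} {c' : E} {s : Set ℝ} {t : ℝ} (hc : HasDerivWithinAt c c' s t) :
    HasDerivWithinAt (fun u => ‖c u‖ ^ 2) (2 * (inner ℂ (c t) c' : ℂ).re) s t := by
  have h1 : HasDerivWithinAt (fun u => (inner ℂ (c u) (c u) : ℂ))
      ((inner ℂ (c t) c' : ℂ) + (inner ℂ c' (c t) : ℂ)) s t := hc.inner ℂ hc
  have h2 := (Complex.reCLM.hasFDerivAt).comp_hasDerivWithinAt t h1
  simp only [Complex.reCLM_apply] at h2
  have : ((inner ℂ (c t) c' : ℂ) + (inner ℂ c' (c t) : ℂ)).re = 2 * (inner ℂ (c t) c' : ℂ).re := by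
    have h3 : (inner ℂ c' (c t) : ℂ).re = (inner ℂ (c t) c' : ℂ).re := by
      rw [← inner_conj_symm (c t) c', Complex.conj_re]
    rw [Complex.add_re, h3]; ring
  rw [this] at h2
  have key : (fun u => ‖c u‖ ^ 2) = (⇑Complex.reCLM ∘ fun u => (inner ℂ (c u) (c u) : ℂ)) := by
    funext u
    rw [← inner_self_eq_norm_sq (𝕜 := ℂ) (c u)]
    rfl
  rw [key]; exact h2

lemma dtau_hasDeriv {H : Type*} [NormedAddCommGroup H] [InnerProductSpace ℂ H]
    (τ : H) (hτ : ‖τ‖ = 1) {w : ℝ → H} {w' : H} {s : Set ℝ} {t : ℝ}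
    (hw : HasDerivWithinAt w w' s t) (hb : ‖w t‖ < 1) :
    HasDerivWithinAt (fun u => dtau τ (w u))
      (2 * (inner ℂ (xstar τ (w t)) w' : ℂ).re * dtau τ (w t)) s t := by
  have hD : (0:ℝ) < 1 - ‖w t‖ ^ 2 := by nlinarith [norm_nonneg (w t)]
  have hDne : (1:ℝ) - ‖w t‖ ^ 2 ≠ 0 := ne_of_gt hD
  have ha : ‖(inner ℂ τ (w t) : ℂ)‖ < 1 := by
    calc ‖(inner ℂ τ (w t) : ℂ)‖ ≤ ‖τ‖ * ‖w t‖ := norm_inner_le_norm τ (w t)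
    _ = ‖w t‖ := by rw [hτ, one_mul]
    _ < 1 := hb
  have hz : (1:ℂ) - (inner ℂ τ (w t) : ℂ) ≠ 0 := by
    intro h
    have : (1:ℂ) = inner ℂ τ (w t) := by linear_combination h
    rw [← this] at ha; simp at ha
  -- derivative of a u = inner ℂ τ (w u)
  have haderiv : HasDerivWithinAt (fun u => (inner ℂ τ (w u) : ℂ)) (inner ℂ τ w' : ℂ) s t := by
    have := ((innerSL ℂ τ).restrictScalars ℝ).hasFDerivAt.comp_hasDerivWithinAt t hw
    simp at this; exact this
  -- derivative of numerator
  have hsub : HasDerivWithinAt (fun u => (1:ℂ) - (inner ℂ τ (w u) : ℂ)) (-(inner ℂ τ w' : ℂ)) s t := by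
    have := (hasDerivWithinAt_const t s (1:ℂ)).sub haderiv
    simp at this; exact this
  have hN : HasDerivWithinAt (fun u => ‖(1:ℂ) - (inner ℂ τ (w u) : ℂ)‖ ^ 2)
      (2 * (inner ℂ ((1:ℂ) - (inner ℂ τ (w t) : ℂ)) (-(inner ℂ τ w' : ℂ)) : ℂ).re) s t :=
    normsq_hasDeriv hsub
  -- derivative of denominator
  have hDd : HasDerivWithinAt (fun u => (1:ℝ) - ‖w u‖ ^ 2)
      (-(2 * (inner ℂ (w t) w' : ℂ).re)) s t := by
    have := (hasDerivWithinAt_const t s (1:ℝ)).sub (normsq_hasDeriv hw)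
    simp at this; exact this
  have hq := hN.div hDd hDne
  refine hq.congr_deriv ?_
  symm
  -- now the scalar identity
  set a : ℂ := (inner ℂ τ (w t) : ℂ) with ha'
  set u : ℂ := (inner ℂ τ w' : ℂ)
  set v : ℂ := (inner ℂ (w t) w' : ℂ)
  set D : ℝ := 1 - ‖w t‖ ^ 2 with hD'
  have hxs : (inner ℂ (xstar τ (w t)) w' : ℂ) = (D : ℂ)⁻¹ * v - ((1:ℂ) - a)⁻¹ * u := by
    rw [xstar, inner_sub_left, inner_smul_left, inner_smul_left]
    have c1 : (starRingEnd ℂ) ((1 - (‖w t‖:ℂ) ^ 2)⁻¹) = (D : ℂ)⁻¹ := by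
      rw [map_inv₀]
      push_cast [hD']
      simp
    have c2 : (starRingEnd ℂ) ((1 - (inner ℂ (w t) τ : ℂ))⁻¹) = ((1:ℂ) - a)⁻¹ := by
      rw [map_inv₀, map_sub, map_one, inner_conj_symm]
    rw [c1, c2]
  rw [dtau, hxs]
  set z : ℂ := (1:ℂ) - a with hz'
  have hnormz : ‖z‖ ^ 2 = Complex.normSq z := by
    rw [← Complex.sq_norm]
  have hnz : Complex.normSq z ≠ 0 := by
    simpa [Complex.normSq_eq_zero] using hz
  have hinv : z⁻¹ = (starRingEnd ℂ) z * (Complex.normSq z : ℂ)⁻¹ := by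
    rw [Complex.inv_def, Complex.ofReal_inv]
  rw [hnormz, hinv]
  have e1 : (inner ℂ z (-u) : ℂ).re = -((starRingEnd ℂ) z * u).re := by
    simp [RCLike.inner_apply]
    ring
  rw [e1]
  have e2 : ((D:ℂ)⁻¹ * v - (starRingEnd ℂ) z * (Complex.normSq z : ℂ)⁻¹ * u).re
      = D⁻¹ * v.re - (Complex.normSq z)⁻¹ * ((starRingEnd ℂ) z * u).re := by
    rw [Complex.sub_re]
    congr 1
    · rw [← Complex.ofReal_inv, Complex.re_ofReal_mul]
    · rw [mul_comm ((starRingEnd ℂ) z) _, mul_assoc, ← Complex.ofReal_inv,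
        Complex.re_ofReal_mul]
  rw [e2]
  rw [← hD']
  field_simp
  ring

lemma dtau_nonneg {H : Type*} [NormedAddCommGroup H] [InnerProductSpace ℂ H]
    (τ y : H) (hy : ‖y‖ < 1) : 0 ≤ dtau τ y := by
  have : (0:ℝ) < 1 - ‖y‖ ^ 2 := by nlinarith [norm_nonneg y]
  exact div_nonneg (by positivity) this.le

theorem stmt4 {H : Type*} [NormedAddCommGroup H] [InnerProductSpace ℂ H] [CompleteSpace H]
    (τ : H) (hτ : ‖τ‖ = 1) (f : H → H) (F : ℝ → H → H) (β : ℝ)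
    (hF0 : ∀ x ∈ ball (0 : H) 1, F 0 x = x)
    (hFsemigroup : ∀ t ≥ (0 : ℝ), ∀ s ≥ (0 : ℝ), ∀ x ∈ ball (0 : H) 1,
      F (t + s) x = F t (F s x))
    (hFmaps : ∀ t ≥ (0 : ℝ), ∀ x ∈ ball (0 : H) 1, F t x ∈ ball (0 : H) 1)
    (hFderiv : ∀ x ∈ ball (0 : H) 1, ∀ t ≥ (0 : ℝ),
      HasDerivWithinAt (fun s => F s x) (-(f (F t x))) (Set.Ici (0 : ℝ)) t)
    (hβ : ∀ x ∈ ball (0 : H) 1, β ≤ 2 * (inner ℂ (xstar τ x) (f x) : ℂ).re) :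
    ∀ x ∈ ball (0 : H) 1, ∀ t ≥ (0 : ℝ),
      dtau τ (F t x) ≤ Real.exp (-(t * β)) * dtau τ x := by
  intro x hx t ht
  have hball : ∀ u ∈ Set.Ici (0:ℝ), ‖F u x‖ < 1 := fun u hu => by
    simpa [mem_ball, dist_eq_norm] using hFmaps u hu x hx
  set g : ℝ → ℝ := fun u => dtau τ (F u x) with hg
  set h : ℝ → ℝ := fun u => Real.exp (u * β) * g u with hh
  -- derivative of g
  have hgderiv : ∀ u ∈ Set.Ici (0:ℝ), HasDerivWithinAt g
      (2 * (inner ℂ (xstar τ (F u x)) (-(f (F u x))) : ℂ).re * g u) (Set.Ici 0) u :=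
    fun u hu => dtau_hasDeriv τ hτ (hFderiv x hx u hu) (hball u hu)
  -- derivative of h
  have hhderiv : ∀ u ∈ Set.Ici (0:ℝ), HasDerivWithinAt h
      (Real.exp (u * β) * β * g u
        + Real.exp (u * β) * (2 * (inner ℂ (xstar τ (F u x)) (-(f (F u x))) : ℂ).re * g u))
      (Set.Ici 0) u := by
    intro u hu
    have hexp : HasDerivWithinAt (fun u : ℝ => Real.exp (u * β)) (Real.exp (u * β) * β)
        (Set.Ici 0) u := by
      simpa using ((((hasDerivAt_id u).mul_const β).exp).hasDerivWithinAt
        (s := Set.Ici 0))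
    exact hexp.mul (hgderiv u hu)
  have hcont : ContinuousOn h (Set.Ici 0) :=
    fun u hu => (hhderiv u hu).continuousWithinAt
  have hanti : AntitoneOn h (Set.Ici (0:ℝ)) := by
    apply antitoneOn_of_hasDerivWithinAt_nonpos (convex_Ici 0) hcont
      (f' := fun u => Real.exp (u * β) * β * g u
        + Real.exp (u * β) * (2 * (inner ℂ (xstar τ (F u x)) (-(f (F u x))) : ℂ).re * g u))
    · intro u hu
      rw [interior_Ici] at hu
      exact ((hhderiv u (Set.Ioi_subset_Ici_self hu)).mono (Set.Ioi_subset_Ici_self)).mono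
        (by rw [interior_Ici])
    · intro u hu
      rw [interior_Ici] at hu
      have hue : u ∈ Set.Ici (0:ℝ) := Set.Ioi_subset_Ici_self hu
      have hg0 : 0 ≤ g u := dtau_nonneg τ _ (hball u hue)
      have hb := hβ (F u x) (hFmaps u hue x hx)
      have hre : (inner ℂ (xstar τ (F u x)) (-(f (F u x))) : ℂ).re
          = -((inner ℂ (xstar τ (F u x)) (f (F u x)) : ℂ).re) := by
        rw [inner_neg_right, Complex.neg_re]
      rw [hre]
      have : Real.exp (u * β) * β * g u
          + Real.exp (u * β) * (2 * -((inner ℂ (xstar τ (F u x)) (f (F u x)) : ℂ).re) * g u)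
          = Real.exp (u * β) * ((β - 2 * (inner ℂ (xstar τ (F u x)) (f (F u x)) : ℂ).re) * g u) := by
        ring
      rw [this]
      have : (β - 2 * (inner ℂ (xstar τ (F u x)) (f (F u x)) : ℂ).re) * g u ≤ 0 :=
        mul_nonpos_of_nonpos_of_nonneg (by linarith) hg0
      exact mul_nonpos_of_nonneg_of_nonpos (Real.exp_nonneg _) this
  have key : h t ≤ h 0 := hanti (Set.self_mem_Ici) ht ht
  have h0 : h 0 = dtau τ x := by
    simp [hh, hg, hF0 x hx]
  rw [h0] at key
  calc dtau τ (F t x) = Real.exp (-(t * β)) * (Real.exp (t * β) * g t) := by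
        rw [← mul_assoc, ← Real.exp_add]; simp [hg]
    _ ≤ Real.exp (-(t * β)) * dtau τ x :=
        mul_le_mul_of_nonneg_left key (Real.exp_nonneg _)
end

section
/- Let H be a complex Hilbert space, B its open unit ball, τ ∈ H a unit vector, f : B → H a mapping, {F_t}_{t≥0} a flow on B generated by f, and γ ∈ ℝ. If d_τ(F_t(x)) ≤ exp(−tγ) · d_τ(x) for all x ∈ B and all t ≥ 0, then 2 Re⟨f(x), x*⟩ ≥ γ for all x ∈ B. -/
open Filter Metric Topology

private lemma aux_deriv_nonneg {h : ℝ → ℝ} {h' : ℝ}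
    (hd : HasDerivWithinAt h h' (Set.Ici 0) 0) (h0 : h 0 = 0)
    (hpos : ∀ t ≥ (0:ℝ), 0 ≤ h t) : 0 ≤ h' := by
  rw [hasDerivWithinAt_iff_tendsto_slope, Set.Ici_sdiff_left] at hd
  refine ge_of_tendsto hd ?_
  filter_upwards [self_mem_nhdsWithin] with t (ht : t ∈ Set.Ioi (0:ℝ))
  rw [slope_def_field]
  have h1 := hpos t (le_of_lt ht)
  have h2 : 0 ≤ h t / t := div_nonneg h1 (le_of_lt ht)
  simpa [h0] using h2

private lemma aux_alg (A q r : ℂ) (n : ℝ) (hA : A ≠ 0) (hn : (1:ℝ) - n^2 ≠ 0) :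
    -((((starRingEnd ℂ) A * q + (starRingEnd ℂ) q * A).re * (1-n^2) -
        ‖A‖^2 * (0 - ((-r) + (-((starRingEnd ℂ) r))).re)) / (1-n^2)^2)
    = 2 * ((((1:ℂ) - (n:ℂ)^2)⁻¹ * r) - A⁻¹ * q).re * (‖A‖^2/(1-n^2)) := by
  have hns : Complex.normSq A ≠ 0 := by simpa [Complex.normSq_eq_zero] using hA
  have hnorm : ‖A‖^2 = Complex.normSq A := by
    rw [Complex.sq_norm]
  set X := ((starRingEnd ℂ) A * q).re with hX
  set Y := r.re with hY
  have e1 : ((starRingEnd ℂ) A * q + (starRingEnd ℂ) q * A).re = 2 * X := by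
    have h : (starRingEnd ℂ) q * A = (starRingEnd ℂ) ((starRingEnd ℂ) A * q) := by
      rw [map_mul]; simp [mul_comm]
    rw [h, Complex.add_conj]; simp [hX, Complex.mul_re]
  have e2 : ((-r) + (-((starRingEnd ℂ) r))).re = -(2*Y) := by
    have h : (-r) + (-((starRingEnd ℂ) r)) = -(r + (starRingEnd ℂ) r) := by ring
    rw [h, Complex.add_conj]; simp [hY]
  have e3 : (((1:ℂ) - (n:ℂ)^2)⁻¹ * r).re = (1-n^2)⁻¹ * Y := by
    have h : ((1:ℂ) - (n:ℂ)^2)⁻¹ = ((((1:ℝ)-n^2)⁻¹ : ℝ) : ℂ) := by push_cast; ring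
    rw [h, Complex.re_ofReal_mul]
  have e4 : (A⁻¹ * q).re = (Complex.normSq A)⁻¹ * X := by
    rw [Complex.inv_def]
    have h : (starRingEnd ℂ) A * (((Complex.normSq A)⁻¹ : ℝ) : ℂ) * q
        = ((((Complex.normSq A)⁻¹:ℝ)):ℂ) * ((starRingEnd ℂ) A * q) := by ring
    rw [h, Complex.re_ofReal_mul]
  rw [hnorm, e1, Complex.sub_re, e3, e4, e2]
  field_simp
  ring

theorem stmt5 {H : Type*} [NormedAddCommGroup H] [InnerProductSpace ℂ H] [CompleteSpace H]
    (τ : H) (hτ : ‖τ‖ = 1) (f : H → H) (F : ℝ → H → H) (γ : ℝ)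
    (hF0 : ∀ x ∈ ball (0 : H) 1, F 0 x = x)
    (hFsemigroup : ∀ t ≥ (0 : ℝ), ∀ s ≥ (0 : ℝ), ∀ x ∈ ball (0 : H) 1,
      F (t + s) x = F t (F s x))
    (hFmaps : ∀ t ≥ (0 : ℝ), ∀ x ∈ ball (0 : H) 1, F t x ∈ ball (0 : H) 1)
    (hFderiv : ∀ x ∈ ball (0 : H) 1, ∀ t ≥ (0 : ℝ),
      HasDerivWithinAt (fun s => F s x) (-(f (F t x))) (Set.Ici (0 : ℝ)) t)
    (hγ : ∀ x ∈ ball (0 : H) 1, ∀ t ≥ (0 : ℝ),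
      dtau τ (F t x) ≤ Real.exp (-(t * γ)) * dtau τ x) :
    ∀ x ∈ ball (0 : H) 1, γ ≤ 2 * (inner ℂ (xstar τ x) (f x) : ℂ).re := by
  intro x hx
  have hF0x : F 0 x = x := hF0 x hx
  have hc : HasDerivWithinAt (fun s => F s x) (-(f x)) (Set.Ici (0:ℝ)) 0 := by
    simpa [hF0x] using hFderiv x hx 0 le_rfl
  have hxn : ‖x‖ < 1 := by simpa using mem_ball_zero_iff.mp hx
  set p : ℂ := inner ℂ τ x with hp
  set A : ℂ := 1 - p with hAdef
  set q : ℂ := inner ℂ τ (f x) with hq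
  set r : ℂ := inner ℂ x (f x) with hr
  have hDpos : (0:ℝ) < 1 - ‖x‖ ^ 2 := by nlinarith [norm_nonneg x]
  have hpnorm : ‖p‖ < 1 := by
    calc ‖p‖ ≤ ‖τ‖ * ‖x‖ := norm_inner_le_norm τ x
    _ ≤ ‖x‖ := by rw [hτ, one_mul]
    _ < 1 := hxn
  have hAne : A ≠ 0 := by
    intro h
    have hp1 : p = 1 := by rw [hAdef] at h; linear_combination -h
    rw [hp1] at hpnorm; simp at hpnorm
  have hdval : dtau τ x = ‖A‖ ^ 2 / (1 - ‖x‖ ^ 2) := by rw [dtau]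
  have hdpos : (0:ℝ) < dtau τ x := by
    rw [hdval]
    exact div_pos (pow_pos (norm_pos_iff.2 hAne) 2) hDpos
  -- derivative of t ↦ 1 - ⟪τ, F t x⟫
  have hA : HasDerivWithinAt (fun t => (1:ℂ) - (inner ℂ τ (F t x) : ℂ))
      q (Set.Ici (0:ℝ)) 0 := by
    have h1 := ((innerSL ℂ τ).restrictScalars ℝ).hasFDerivAt.comp_hasDerivWithinAt (0:ℝ) hc
    simpa [hF0x, inner_neg_right, hq, Pi.sub_def] using
      (hasDerivWithinAt_const (0:ℝ) (Set.Ici (0:ℝ)) (1:ℂ)).sub h1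
  have hAA := hA.inner ℂ hA
  have hN := Complex.reCLM.hasFDerivAt.comp_hasDerivWithinAt (0:ℝ) hAA
  have hxx := hc.inner ℂ hc
  have hD' := Complex.reCLM.hasFDerivAt.comp_hasDerivWithinAt (0:ℝ) hxx
  have hD := (hasDerivWithinAt_const (0:ℝ) (Set.Ici (0:ℝ)) (1:ℝ)).sub hD'
  have key : ∀ z : ℂ, Complex.reCLM (inner ℂ z z : ℂ) = ‖z‖ ^ 2 := fun z => by
    simpa using inner_self_eq_norm_sq (𝕜 := ℂ) z
  have key2 : ∀ y : H, Complex.reCLM (inner ℂ y y : ℂ) = ‖y‖ ^ 2 := fun y => by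
    simpa using inner_self_eq_norm_sq (𝕜 := ℂ) y
  have hNfun : (fun t => ‖(1:ℂ) - (inner ℂ τ (F t x) : ℂ)‖ ^ 2)
      = (⇑Complex.reCLM ∘ fun t =>
          (inner ℂ ((1:ℂ) - inner ℂ τ (F t x)) ((1:ℂ) - inner ℂ τ (F t x)) : ℂ)) := by
    funext t; exact (key _).symm
  have hDfun : (fun t => 1 - ‖F t x‖ ^ 2)
      = (fun s => 1 - (⇑Complex.reCLM ∘ fun t => (inner ℂ (F t x) (F t x) : ℂ)) s) := by
    funext t; exact congrArg (1 - ·) (key2 _).symm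
  rw [← hNfun] at hN
  simp only [Pi.sub_def] at hD
  rw [← hDfun] at hD
  have hDne : (1:ℝ) - ‖F 0 x‖ ^ 2 ≠ 0 := by rw [hF0x]; exact ne_of_gt hDpos
  have hg0 := hN.div hD hDne
  set E : ℝ := (Complex.reCLM ((inner ℂ A q : ℂ) + (inner ℂ q A : ℂ)) * (1 - ‖x‖ ^ 2) -
      ‖A‖ ^ 2 * (0 - Complex.reCLM ((inner ℂ x (-(f x)) : ℂ) + (inner ℂ (-(f x)) x : ℂ)))) /
      (1 - ‖x‖ ^ 2) ^ 2 with hE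
  have hg : HasDerivWithinAt (fun t => dtau τ (F t x)) E (Set.Ici (0:ℝ)) 0 := by
    simp only [dtau, hE]
    rw [hF0x] at hg0; exact hg0
  -- the exponential comparison function
  have hexp : HasDerivWithinAt (fun t : ℝ => Real.exp (-(t * γ)) * dtau τ x)
      (-γ * dtau τ x) (Set.Ici (0:ℝ)) 0 := by
    have h1 : HasDerivAt (fun t : ℝ => -(t * γ)) (-γ) 0 := by
      have h := ((hasDerivAt_id (0:ℝ)).mul_const γ).neg; simp at h; exact h
    have h2 : HasDerivAt (fun t : ℝ => Real.exp (-(t * γ))) (-γ) 0 := by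
      have h := (Real.hasDerivAt_exp (-(0 * γ))).comp 0 h1; simp at h; exact h
    exact (h2.hasDerivWithinAt).mul_const _
  have hh := hexp.sub hg
  have h0 : Real.exp (-(0 * γ)) * dtau τ x - dtau τ (F 0 x) = 0 := by
    simp [hF0x]
  have hD0 : 0 ≤ -γ * dtau τ x - E := by
    refine aux_deriv_nonneg hh h0 ?_
    intro t ht
    have := hγ x hx t ht
    simp only [Pi.sub_apply]; linarith
  -- identify E with the support functional expression
  have hip : 2 * (inner ℂ (xstar τ x) (f x) : ℂ).re
      = 2 * ((((1:ℂ) - (‖x‖:ℂ)^2)⁻¹ * r) - A⁻¹ * q).re := by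
    congr 2
    rw [xstar, inner_sub_left, inner_smul_left, inner_smul_left]
    have c1 : (starRingEnd ℂ) ((1 - (‖x‖ : ℂ) ^ 2)⁻¹) = (1 - (‖x‖ : ℂ) ^ 2)⁻¹ := by
      rw [map_inv₀]; congr 1
      rw [map_sub, map_one, map_pow, Complex.conj_ofReal]
    have c2 : (starRingEnd ℂ) ((1 - (inner ℂ x τ : ℂ))⁻¹) = A⁻¹ := by
      rw [map_inv₀, map_sub, map_one, inner_conj_symm]
    rw [c1, c2, hr, hq]
  have hEeq : -E = 2 * (inner ℂ (xstar τ x) (f x) : ℂ).re * dtau τ x := by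
    rw [hip, hdval, hE]
    have i1 : (inner ℂ A q : ℂ) = (starRingEnd ℂ) A * q := by rw [RCLike.inner_apply, mul_comm]
    have i2 : (inner ℂ q A : ℂ) = (starRingEnd ℂ) q * A := by rw [RCLike.inner_apply, mul_comm]
    have i3 : (inner ℂ x (-(f x)) : ℂ) = -r := by rw [inner_neg_right, hr]
    have i4 : (inner ℂ (-(f x)) x : ℂ) = -((starRingEnd ℂ) r) := by
      rw [inner_neg_left, ← inner_conj_symm, hr]
    simp only [i1, i2, i3, i4, Complex.reCLM_apply]
    exact aux_alg A q r ‖x‖ hAne (ne_of_gt hDpos)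
  have hfinal : γ * dtau τ x ≤ 2 * (inner ℂ (xstar τ x) (f x) : ℂ).re * dtau τ x := by
    rw [← hEeq]; linarith
  exact le_of_mul_le_mul_right (by linarith) hdpos
end

section
/- Let H be a complex Hilbert space, B its open unit ball, τ ∈ H a unit vector, f : B → H a ρ-monotone mapping with strong radial limit lim_{r→1⁻} f(rτ) = 0, and let {F_t}_{t≥0} be a flow on B generated by f. Then the following are equivalent: (I) limsup_{r→1⁻} Re⟨f(rτ), τ⟩/(r−1) > −∞; (II) α := lim_{r→1⁻} Re⟨f(rτ), τ⟩/(r−1) exists finitely; (III) β := inf_{x∈B} 2 Re⟨f(x), x*⟩ > −∞; (IV) there exists γ ∈ ℝ such that d_τ(F_t(x)) ≤ exp(−tγ) · d_τ(x) for all x ∈ B and t ≥ 0. Moreover, when these hold, α = β and β is the maximal γ for which the inequality in (IV) holds. -/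
open Filter Metric Topology

/-- The radial difference quotient `Re⟨f(rτ),τ⟩ / (r - 1)`. -/
noncomputable def radQuot {H : Type*} [NormedAddCommGroup H] [InnerProductSpace ℂ H]
    (τ : H) (f : H → H) (r : ℝ) : ℝ :=
  (inner ℂ τ (f ((r : ℂ) • τ)) : ℂ).re / (r - 1)

/-- `β = inf_{x ∈ B} 2 Re⟨f(x), x*⟩`, as an extended real number. -/
noncomputable def betaInf {H : Type*} [NormedAddCommGroup H] [InnerProductSpace ℂ H]
    (τ : H) (f : H → H) : EReal :=
  ⨅ x ∈ ball (0 : H) 1, ((2 * (inner ℂ (xstar τ x) (f x) : ℂ).re : ℝ) : EReal)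

open Set

namespace Stmt6Aux
variable {H : Type*} [NormedAddCommGroup H] [InnerProductSpace ℂ H]

lemma re_ofReal_mul' (r : ℝ) (z : ℂ) : ((r:ℂ) * z).re = r * z.re := by
  simp [Complex.mul_re]

lemma div_real_re (z : ℂ) (c : ℝ) : (z / (c:ℂ)).re = z.re / c := by
  rw [div_eq_mul_inv, ← Complex.ofReal_inv, mul_comm, re_ofReal_mul', div_eq_inv_mul, mul_comm]

lemma re_div_eq (w ζ : ℂ) (hζ : ζ ≠ 0) :
    (w / ζ).re = ((starRingEnd ℂ) ζ * w).re / ‖ζ‖ ^ 2 := by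
  have h : w / ζ = (((‖ζ‖^2)⁻¹:ℝ):ℂ) * ((starRingEnd ℂ) ζ * w) := by
    rw [div_eq_mul_inv, Complex.inv_def, ← Complex.sq_norm]
    push_cast
    ring
  rw [h, re_ofReal_mul', div_eq_inv_mul]

lemma norm_inner_lt {τ x : H} (hτ : ‖τ‖ = 1) (hx : x ∈ ball (0:H) 1) :
    ‖(inner ℂ τ x : ℂ)‖ < 1 := by
  rw [mem_ball_zero_iff] at hx
  calc ‖(inner ℂ τ x : ℂ)‖ ≤ ‖τ‖ * ‖x‖ := norm_inner_le_norm τ x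
  _ = ‖x‖ := by rw [hτ, one_mul]
  _ < 1 := hx

lemma one_sub_inner_ne {τ x : H} (hτ : ‖τ‖ = 1) (hx : x ∈ ball (0:H) 1) :
    (1:ℂ) - (inner ℂ τ x : ℂ) ≠ 0 := by
  intro h
  have h1 : (inner ℂ τ x : ℂ) = 1 := by linear_combination -h
  have := norm_inner_lt hτ hx
  rw [h1] at this; simp at this

lemma denom_pos {x : H} (hx : x ∈ ball (0:H) 1) : 0 < 1 - ‖x‖ ^ 2 := by
  rw [mem_ball_zero_iff] at hx
  nlinarith [norm_nonneg x]

lemma dtau_pos {τ x : H} (hτ : ‖τ‖ = 1) (hx : x ∈ ball (0:H) 1) : 0 < dtau τ x := by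
  apply div_pos _ (denom_pos hx)
  exact pow_pos (norm_pos_iff.mpr (one_sub_inner_ne hτ hx)) 2

/-- Re ⟪x*, w⟫ decomposition. -/
lemma xstar_re {τ x : H} (hτ : ‖τ‖ = 1) (hx : x ∈ ball (0:H) 1) (w : H) :
    2 * (inner ℂ (xstar τ x) w : ℂ).re =
      2 * ((inner ℂ x w : ℂ).re / (1 - ‖x‖ ^ 2) - ((inner ℂ τ w : ℂ) / (1 - (inner ℂ τ x : ℂ))).re) := by
  have h1 : (inner ℂ (xstar τ x) w : ℂ)
      = ((1 - ((‖x‖:ℝ):ℂ) ^ 2)⁻¹) * (inner ℂ x w : ℂ)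
        - ((1 - (inner ℂ τ x : ℂ))⁻¹) * (inner ℂ τ w : ℂ) := by
    simp [xstar, inner_sub_left, inner_smul_left, map_inv₀, map_sub, map_one, map_pow,
      Complex.conj_ofReal, inner_conj_symm]
    ring
  have h2 : ((1 - ((‖x‖:ℝ):ℂ) ^ 2)⁻¹) * (inner ℂ x w : ℂ)
      = (inner ℂ x w : ℂ) / (((1 - ‖x‖^2 : ℝ)):ℂ) := by
    push_cast
    rw [div_eq_mul_inv, mul_comm]
  rw [h1, Complex.sub_re, h2, div_real_re, inv_mul_eq_div]
noncomputable def gfun (τ : H) (f : H → H) (r : ℝ) : ℝ :=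
  (inner ℂ τ (f ((r : ℂ) • τ)) : ℂ).re / (1 - r ^ 2)

lemma norm_ofReal_smul {τ : H} (hτ : ‖τ‖ = 1) (r : ℝ) : ‖(r : ℂ) • τ‖ = |r| := by
  rw [norm_smul, hτ, mul_one, Complex.norm_real, Real.norm_eq_abs]

lemma smul_mem_ball {τ : H} (hτ : ‖τ‖ = 1) {r : ℝ} (hr : |r| < 1) :
    (r : ℂ) • τ ∈ ball (0:H) 1 := by
  rw [mem_ball_zero_iff, norm_ofReal_smul hτ]; exact hr

lemma inner_tau_tau {τ : H} (hτ : ‖τ‖ = 1) : (inner ℂ τ τ : ℂ) = 1 := by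
  rw [inner_self_eq_norm_sq_to_K, hτ]; norm_num

lemma gfun_mono {τ : H} (hτ : ‖τ‖ = 1) {f : H → H} (hf : RhoMonotone f) :
    MonotoneOn (gfun τ f) (Ico 0 1) := by
  rintro s ⟨hs0, hs1⟩ r ⟨hr0, hr1⟩ hsr
  rcases eq_or_lt_of_le hsr with rfl | hlt
  · exact le_refl _
  have hsb : (s:ℂ) • τ ∈ ball (0:H) 1 := smul_mem_ball hτ (by rwa [abs_of_nonneg hs0])
  have hrb : (r:ℂ) • τ ∈ ball (0:H) 1 := smul_mem_ball hτ (by rwa [abs_of_nonneg hr0])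
  have key := hf ((s:ℂ) • τ) hsb ((r:ℂ) • τ) hrb
  set A := (inner ℂ τ (f ((s:ℂ) • τ)) : ℂ) with hA
  set B := (inner ℂ τ (f ((r:ℂ) • τ)) : ℂ) with hB
  have e1 : (inner ℂ ((r:ℂ) • τ) (f ((s:ℂ) • τ)) : ℂ) = (r:ℂ) * A := by
    rw [inner_smul_left, Complex.conj_ofReal]
  have e2 : (inner ℂ (f ((r:ℂ) • τ)) ((s:ℂ) • τ) : ℂ) = (s:ℂ) * (starRingEnd ℂ) B := by
    rw [inner_smul_right, ← inner_conj_symm]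
  have e3 : (inner ℂ ((r:ℂ) • τ) ((s:ℂ) • τ) : ℂ) = ((r * s : ℝ) : ℂ) := by
    rw [inner_smul_left, inner_smul_right, inner_tau_tau hτ, Complex.conj_ofReal]
    push_cast; ring
  have e4 : (inner ℂ ((s:ℂ) • τ) (f ((s:ℂ) • τ)) : ℂ) = (s:ℂ) * A := by
    rw [inner_smul_left, Complex.conj_ofReal]
  have e5 : (inner ℂ (f ((r:ℂ) • τ)) ((r:ℂ) • τ) : ℂ) = (r:ℂ) * (starRingEnd ℂ) B := by
    rw [inner_smul_right, ← inner_conj_symm]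
  have e6 : ‖(s:ℂ) • τ‖ = s := by rw [norm_ofReal_smul hτ, abs_of_nonneg hs0]
  have e7 : ‖(r:ℂ) • τ‖ = r := by rw [norm_ofReal_smul hτ, abs_of_nonneg hr0]
  rw [e1, e2, e3, e4, e5, e6, e7] at key
  have c1 : (1:ℂ) - ((r * s : ℝ) : ℂ) = ((1 - r * s : ℝ) : ℂ) := by push_cast; ring
  have c2 : (1:ℂ) - ((s : ℝ) : ℂ) ^ 2 = ((1 - s ^ 2 : ℝ) : ℂ) := by push_cast; ring
  have c3 : (1:ℂ) - ((r : ℝ) : ℂ) ^ 2 = ((1 - r ^ 2 : ℝ) : ℂ) := by push_cast; ring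
  rw [c1, c2, c3, Complex.add_re, div_real_re, div_real_re, div_real_re, Complex.add_re,
    re_ofReal_mul', re_ofReal_mul', re_ofReal_mul', re_ofReal_mul', Complex.conj_re] at key
  -- key : (r * A.re + s * B.re) / (1 - r*s) ≤ s * A.re / (1 - s^2) + r * B.re / (1 - r^2)
  set a := A.re
  set b := B.re
  have hq : (0:ℝ) < 1 - s ^ 2 := by nlinarith
  have hw : (0:ℝ) < 1 - r ^ 2 := by nlinarith
  have hp : (0:ℝ) < 1 - r * s := by nlinarith
  have key2 : (r * a + s * b) * ((1 - s ^ 2) * (1 - r ^ 2)) ≤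
      (s * a * (1 - r ^ 2) + r * b * (1 - s ^ 2)) * (1 - r * s) := by
    rw [div_add_div _ _ (ne_of_gt hq) (ne_of_gt hw), div_le_div_iff₀ hp (mul_pos hq hw)] at key
    linarith [key]
  have hdiff : a * (1 - r ^ 2) * (r - s) ≤ b * (1 - s ^ 2) * (r - s) := by nlinarith [key2]
  have := le_of_mul_le_mul_right (by linarith [hdiff] : a * (1 - r^2) * (r-s) ≤ b * (1 - s^2) * (r-s)) (by linarith : (0:ℝ) < r - s)
  rw [gfun, gfun, div_le_div_iff₀ hq hw]
  linarith [this]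

lemma xstar_smul_re {τ : H} (hτ : ‖τ‖ = 1) (f : H → H) {r : ℝ} (hr : r ∈ Ico (0:ℝ) 1) :
    2 * (inner ℂ (xstar τ ((r:ℂ) • τ)) (f ((r:ℂ) • τ)) : ℂ).re = -(2 * gfun τ f r) := by
  obtain ⟨hr0, hr1⟩ := hr
  have hrb : (r:ℂ) • τ ∈ ball (0:H) 1 := smul_mem_ball hτ (by rwa [abs_of_nonneg hr0])
  rw [xstar_re hτ hrb]
  set B := (inner ℂ τ (f ((r:ℂ) • τ)) : ℂ) with hB
  have e1 : (inner ℂ ((r:ℂ) • τ) (f ((r:ℂ) • τ)) : ℂ) = (r:ℂ) * B := by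
    rw [inner_smul_left, Complex.conj_ofReal]
  have e2 : (inner ℂ τ ((r:ℂ) • τ) : ℂ) = ((r:ℝ):ℂ) := by
    rw [inner_smul_right, inner_tau_tau hτ, mul_one]
  have e7 : ‖(r:ℂ) • τ‖ = r := by rw [norm_ofReal_smul hτ, abs_of_nonneg hr0]
  have c1 : (1:ℂ) - ((r:ℝ):ℂ) = ((1 - r : ℝ) : ℂ) := by push_cast; ring
  rw [e1, e2, e7, c1, div_real_re, re_ofReal_mul']
  rw [gfun]
  set b := B.re
  have h1 : (1:ℝ) - r ≠ 0 := by intro h; nlinarith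
  have h2 : (1:ℝ) - r ^ 2 ≠ 0 := by intro h; nlinarith
  field_simp
  ring

lemma radQuot_eq {τ : H} (f : H → H) {r : ℝ} (hr : r ∈ Ico (0:ℝ) 1) :
    radQuot τ f r = -((1 + r) * gfun τ f r) := by
  obtain ⟨hr0, hr1⟩ := hr
  rw [radQuot, gfun]
  have h1 : r - 1 ≠ 0 := by intro h; nlinarith
  have h2 : (1:ℝ) - r ^ 2 ≠ 0 := by intro h; nlinarith
  field_simp
  ring
lemma gfun_tendsto_bdd {τ : H} (hτ : ‖τ‖ = 1) {f : H → H} (hf : RhoMonotone f)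
    (hbdd : BddAbove (gfun τ f '' Ioo 0 1)) :
    Tendsto (gfun τ f) (𝓝[<] (1:ℝ)) (𝓝 (sSup (gfun τ f '' Ioo 0 1))) :=
  MonotoneOn.tendsto_nhdsWithin_Ioo_left ⟨1/2, by norm_num⟩
    ((gfun_mono hτ hf).mono Ioo_subset_Ico_self) hbdd

lemma gfun_tendsto_unbdd {τ : H} (hτ : ‖τ‖ = 1) {f : H → H} (hf : RhoMonotone f)
    (hbdd : ¬ BddAbove (gfun τ f '' Ioo 0 1)) :
    Tendsto (gfun τ f) (𝓝[<] (1:ℝ)) atTop := by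
  rw [Filter.tendsto_atTop]
  intro M
  obtain ⟨y, ⟨r, hr, rfl⟩, hy⟩ := not_bddAbove_iff.1 hbdd M
  filter_upwards [Ioo_mem_nhdsLT hr.2] with t ht
  exact le_trans hy.le
    ((gfun_mono hτ hf) ⟨hr.1.le, hr.2⟩ ⟨hr.1.le.trans ht.1.le, ht.2⟩ ht.1.le)

lemma keyB {τ : H} (hτ : ‖τ‖ = 1) {f : H → H} (hf : RhoMonotone f)
    (hlim : Tendsto (fun r : ℝ => f ((r : ℂ) • τ)) (𝓝[<] (1:ℝ)) (𝓝 (0:H)))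
    {L : ℝ} (hgL : Tendsto (gfun τ f) (𝓝[<] (1:ℝ)) (𝓝 L))
    {x : H} (hx : x ∈ ball (0:H) 1) :
    ((inner ℂ τ (f x) : ℂ) / (1 - (inner ℂ τ x : ℂ))).re ≤
      (inner ℂ x (f x) : ℂ).re / (1 - ‖x‖ ^ 2) + L := by
  set l := 𝓝[<] (1:ℝ)
  have hev : ∀ᶠ r in l, r ∈ Ioo (0:ℝ) 1 := Ioo_mem_nhdsLT one_pos
  set LHS : ℝ → ℝ := fun r =>
    (((inner ℂ ((r:ℂ) • τ) (f x) : ℂ) + (inner ℂ (f ((r:ℂ) • τ)) x : ℂ)) /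
      (1 - (inner ℂ ((r:ℂ) • τ) x : ℂ))).re with hLHS
  set RHS : ℝ → ℝ := fun r =>
    ((inner ℂ x (f x) : ℂ) / (1 - (‖x‖:ℂ) ^ 2)
      + (inner ℂ (f ((r:ℂ) • τ)) ((r:ℂ) • τ) : ℂ) / (1 - (‖(r:ℂ) • τ‖ : ℂ) ^ 2)).re with hRHS
  have hle : ∀ᶠ r in l, LHS r ≤ RHS r := by
    filter_upwards [hev] with r hr
    exact hf x hx ((r:ℂ) • τ) (smul_mem_ball hτ (by rw [abs_of_nonneg hr.1.le]; exact hr.2))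
  have hT : Tendsto (fun r : ℝ => (r:ℂ) • τ) l (𝓝 τ) := by
    have hc : Continuous fun r : ℝ => (r:ℂ) • τ := (Complex.continuous_ofReal).smul continuous_const
    have := (hc.tendsto 1).mono_left (nhdsWithin_le_nhds (s := Iio (1:ℝ)))
    simpa using this
  have hne : (1:ℂ) - (inner ℂ τ x : ℂ) ≠ 0 := one_sub_inner_ne hτ hx
  have hnum : Tendsto (fun r : ℝ => (inner ℂ ((r:ℂ) • τ) (f x) : ℂ) + (inner ℂ (f ((r:ℂ) • τ)) x : ℂ))
      l (𝓝 ((inner ℂ τ (f x) : ℂ) + 0)) := by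
    exact (hT.inner tendsto_const_nhds).add (by simpa using (hlim.inner (tendsto_const_nhds (x := x))))
  have hden : Tendsto (fun r : ℝ => (1:ℂ) - (inner ℂ ((r:ℂ) • τ) x : ℂ)) l (𝓝 ((1:ℂ) - inner ℂ τ x)) :=
    tendsto_const_nhds.sub (hT.inner tendsto_const_nhds)
  have hLHSlim : Tendsto LHS l (𝓝 (((inner ℂ τ (f x) : ℂ) / (1 - (inner ℂ τ x : ℂ))).re)) := by
    have := (hnum.div hden hne)
    rw [add_zero] at this
    exact (Complex.continuous_re.tendsto _).comp this
  have hRHSeq : ∀ᶠ r in l, RHS r =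
      (inner ℂ x (f x) : ℂ).re / (1 - ‖x‖ ^ 2) + r * gfun τ f r := by
    filter_upwards [hev] with r hr
    have e5 : (inner ℂ (f ((r:ℂ) • τ)) ((r:ℂ) • τ) : ℂ)
        = (r:ℂ) * (starRingEnd ℂ) (inner ℂ τ (f ((r:ℂ) • τ)) : ℂ) := by
      rw [inner_smul_right, ← inner_conj_symm]
    have e7 : ‖(r:ℂ) • τ‖ = r := by rw [norm_ofReal_smul hτ, abs_of_nonneg hr.1.le]
    have c2 : (1:ℂ) - ((r:ℝ):ℂ) ^ 2 = ((1 - r ^ 2 : ℝ) : ℂ) := by push_cast; ring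
    have c3 : (1:ℂ) - ((‖x‖:ℝ):ℂ) ^ 2 = ((1 - ‖x‖ ^ 2 : ℝ) : ℂ) := by push_cast; ring
    rw [hRHS]
    simp only [e5, e7, c2, c3, Complex.add_re, div_real_re, re_ofReal_mul', Complex.conj_re]
    rw [gfun]
    ring
  have hRHSlim : Tendsto RHS l (𝓝 ((inner ℂ x (f x) : ℂ).re / (1 - ‖x‖ ^ 2) + 1 * L)) := by
    apply Tendsto.congr' (EventuallyEq.symm hRHSeq)
    exact tendsto_const_nhds.add
      ((tendsto_id.mono_left (nhdsWithin_le_nhds)).mul hgL)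
  rw [one_mul] at hRHSlim
  exact le_of_tendsto_of_tendsto hLHSlim hRHSlim hle
lemma quot_identity (P Q Nv Dv : ℝ) (hN : Nv ≠ 0) (hD : Dv ≠ 0) :
    -(2 * (Q / Dv - P / Nv)) * (Nv / Dv) = (2 * P * Dv - Nv * (2 * Q)) / Dv ^ 2 := by
  field_simp
  ring

lemma dtau_hasDeriv {τ : H} (hτ : ‖τ‖ = 1) (f : H → H) {c : ℝ → H} {s : Set ℝ} {t : ℝ}
    (hc : HasDerivWithinAt c (-(f (c t))) s t) (hct : c t ∈ ball (0:H) 1) :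
    HasDerivWithinAt (fun u => dtau τ (c u))
      (-(2 * (inner ℂ (xstar τ (c t)) (f (c t)) : ℂ).re) * dtau τ (c t)) s t := by
  set w := f (c t) with hw
  set ζ : ℂ := (1:ℂ) - (inner ℂ τ (c t) : ℂ) with hζ
  have hζne : ζ ≠ 0 := one_sub_inner_ne hτ hct
  have hNpos : (0:ℝ) < ‖ζ‖ ^ 2 := pow_pos (norm_pos_iff.mpr hζne) 2
  have hDpos : (0:ℝ) < 1 - ‖c t‖ ^ 2 := denom_pos hct
  -- derivative of z u = 1 - ⟪τ, c u⟫
  have h1 : HasDerivWithinAt (fun u => (inner ℂ τ (c u) : ℂ)) ((inner ℂ τ (-w) : ℂ) : ℂ) s t := by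
    have := (hasDerivWithinAt_const t s τ).inner (𝕜 := ℂ) hc
    simpa using this
  have hz : HasDerivWithinAt (fun u => (1:ℂ) - (inner ℂ τ (c u) : ℂ)) ((inner ℂ τ w : ℂ)) s t := by
    have := h1.const_sub (1:ℂ)
    simpa [inner_neg_right] using this
  -- derivative of N u = ‖1 - ⟪τ, c u⟫‖²
  have h2 := hz.inner (𝕜 := ℂ) hz
  have h3 := (Complex.reCLM.hasFDerivAt).comp_hasDerivWithinAt t h2
  have hN : HasDerivWithinAt (fun u => ‖(1:ℂ) - (inner ℂ τ (c u) : ℂ)‖ ^ 2)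
      (2 * ((starRingEnd ℂ) ζ * (inner ℂ τ w : ℂ)).re) s t := by
    have hfun : (fun u => ‖(1:ℂ) - (inner ℂ τ (c u) : ℂ)‖ ^ 2)
        = fun u => Complex.reCLM ((inner ℂ ((1:ℂ) - (inner ℂ τ (c u) : ℂ)) ((1:ℂ) - (inner ℂ τ (c u) : ℂ)) : ℂ)) := by
      funext u
      have := inner_self_eq_norm_sq (𝕜 := ℂ) ((1:ℂ) - (inner ℂ τ (c u) : ℂ))
      simpa [Complex.reCLM_apply] using this.symm
    rw [hfun]
    refine h3.congr_deriv (Eq.symm ?_)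
    simp only [Function.comp, Complex.reCLM_apply, RCLike.inner_apply, Complex.add_re]
    have : ((starRingEnd ℂ) (inner ℂ τ w : ℂ) * ζ).re = ((starRingEnd ℂ) ζ * (inner ℂ τ w : ℂ)).re := by
      rw [show (starRingEnd ℂ) (inner ℂ τ w : ℂ) * ζ = (starRingEnd ℂ) ((starRingEnd ℂ) ζ * (inner ℂ τ w : ℂ)) by
        rw [map_mul, Complex.conj_conj]; ring, Complex.conj_re]
    rw [← hζ, mul_comm (inner ℂ τ w : ℂ) _, mul_comm ζ, this]; ring
  -- derivative of D u = 1 - ‖c u‖²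
  have h4 := hc.inner (𝕜 := ℂ) hc
  have h5 := (Complex.reCLM.hasFDerivAt).comp_hasDerivWithinAt t h4
  have hD : HasDerivWithinAt (fun u => 1 - ‖c u‖ ^ 2) (2 * (inner ℂ (c t) w : ℂ).re) s t := by
    have hfun : (fun u => 1 - ‖c u‖ ^ 2)
        = fun u => 1 - Complex.reCLM ((inner ℂ (c u) (c u) : ℂ)) := by
      funext u
      have := inner_self_eq_norm_sq (𝕜 := ℂ) (c u)
      simp only [Complex.reCLM_apply]
      have h' : ((inner ℂ (c u) (c u) : ℂ)).re = ‖c u‖ ^ 2 := by simpa using this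
      rw [h']
    rw [hfun]
    have := (hasDerivWithinAt_const t s (1:ℝ)).sub h5
    refine this.congr_deriv (Eq.symm ?_)
    simp only [Function.comp, Complex.reCLM_apply, inner_neg_left, inner_neg_right, Complex.add_re]
    have : ((inner ℂ w (c t) : ℂ)).re = ((inner ℂ (c t) w : ℂ)).re := by
      rw [← inner_conj_symm, Complex.conj_re]
    rw [Complex.neg_re, Complex.neg_re, this]; ring
  -- quotient rule
  have hdiv := hN.div hD (ne_of_gt hDpos)
  have hfun2 : (fun u => dtau τ (c u))
      = fun u => ‖(1:ℂ) - (inner ℂ τ (c u) : ℂ)‖ ^ 2 / (1 - ‖c u‖ ^ 2) := by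
    funext u; rw [dtau]
  rw [hfun2]
  refine hdiv.congr_deriv (Eq.symm ?_)
  rw [xstar_re hτ hct w, re_div_eq _ _ hζne]
  rw [dtau, ← hζ]
  exact quot_identity _ _ _ _ (ne_of_gt hNpos) (ne_of_gt hDpos)
section Flow
variable {τ : H} {f : H → H} {F : ℝ → H → H}

lemma dtau_hasDerivF (hτ : ‖τ‖ = 1)
    (hFmaps : ∀ t ≥ (0 : ℝ), ∀ x ∈ ball (0 : H) 1, F t x ∈ ball (0 : H) 1)
    (hFderiv : ∀ x ∈ ball (0 : H) 1, ∀ t ≥ (0 : ℝ),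
      HasDerivWithinAt (fun s => F s x) (-(f (F t x))) (Set.Ici (0 : ℝ)) t)
    {x : H} (hx : x ∈ ball (0:H) 1) {t : ℝ} (ht : 0 ≤ t) :
    HasDerivWithinAt (fun s => dtau τ (F s x))
      (-(2 * (inner ℂ (xstar τ (F t x)) (f (F t x)) : ℂ).re) * dtau τ (F t x))
      (Ici 0) t :=
  dtau_hasDeriv hτ f (hFderiv x hx t ht) (hFmaps t ht x hx)

lemma gronwall (hτ : ‖τ‖ = 1)
    (hF0 : ∀ x ∈ ball (0 : H) 1, F 0 x = x)
    (hFmaps : ∀ t ≥ (0 : ℝ), ∀ x ∈ ball (0 : H) 1, F t x ∈ ball (0 : H) 1)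
    (hFderiv : ∀ x ∈ ball (0 : H) 1, ∀ t ≥ (0 : ℝ),
      HasDerivWithinAt (fun s => F s x) (-(f (F t x))) (Set.Ici (0 : ℝ)) t)
    {γ : ℝ} (hγ : ∀ y ∈ ball (0:H) 1, γ ≤ 2 * (inner ℂ (xstar τ y) (f y) : ℂ).re)
    {x : H} (hx : x ∈ ball (0:H) 1) {t : ℝ} (ht : 0 ≤ t) :
    dtau τ (F t x) ≤ Real.exp (-(t * γ)) * dtau τ x := by
  set u : ℝ → ℝ := fun s => dtau τ (F s x) with hu
  set φ : ℝ → ℝ := fun s => 2 * (inner ℂ (xstar τ (F s x)) (f (F s x)) : ℂ).re with hφ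
  set ψ : ℝ → ℝ := fun s => Real.exp (γ * s) * u s with hψ
  have hψder : ∀ s ∈ Ici (0:ℝ), HasDerivWithinAt ψ
      (Real.exp (γ * s) * γ * u s + Real.exp (γ * s) * (-(φ s) * u s)) (Ici 0) s := by
    intro s hs
    have hexp : HasDerivWithinAt (fun s => Real.exp (γ * s)) (Real.exp (γ * s) * γ) (Ici 0) s := by
      have h := (((hasDerivAt_id s).const_mul γ).exp).hasDerivWithinAt (s := Ici (0:ℝ))
      simpa using h
    exact hexp.mul (dtau_hasDerivF hτ hFmaps hFderiv hx hs)
  have hanti : AntitoneOn ψ (Ici 0) := by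
    apply antitoneOn_of_hasDerivWithinAt_nonpos (convex_Ici 0)
      (fun s hs => (hψder s hs).continuousWithinAt)
      (f' := fun s => Real.exp (γ * s) * γ * u s + Real.exp (γ * s) * (-(φ s) * u s))
    · intro s hs
      rw [interior_Ici] at hs
      exact ((hψder s (mem_Ici.mpr (le_of_lt hs))).hasDerivAt (Ici_mem_nhds hs)).hasDerivWithinAt
    · intro s hs
      rw [interior_Ici] at hs
      have hball := hFmaps s (le_of_lt hs) x hx
      have h1 : γ ≤ φ s := hγ _ hball
      have h2 : 0 < u s := dtau_pos hτ hball
      have h3 : 0 < Real.exp (γ * s) := Real.exp_pos _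
      have h4 : u s * (γ - φ s) ≤ 0 := mul_nonpos_iff.mpr (Or.inl ⟨h2.le, by linarith⟩)
      have h5 : Real.exp (γ * s) * (u s * (γ - φ s)) ≤ 0 :=
        mul_nonpos_iff.mpr (Or.inl ⟨h3.le, h4⟩)
      calc Real.exp (γ * s) * γ * u s + Real.exp (γ * s) * (-(φ s) * u s)
          = Real.exp (γ * s) * (u s * (γ - φ s)) := by ring
      _ ≤ 0 := h5
  have hψt : ψ t ≤ ψ 0 := hanti self_mem_Ici ht ht
  have hψ0 : ψ 0 = dtau τ x := by
    simp only [hψ, hu, mul_zero, Real.exp_zero, one_mul]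
    rw [hF0 x hx]
  rw [hψ0] at hψt
  have key := mul_le_mul_of_nonneg_left hψt (Real.exp_pos (-(t * γ))).le
  calc dtau τ (F t x) = Real.exp (-(t * γ)) * (Real.exp (γ * t) * u t) := by
        rw [← mul_assoc, ← Real.exp_add, show -(t * γ) + γ * t = 0 by ring, Real.exp_zero, one_mul]
  _ ≤ Real.exp (-(t * γ)) * dtau τ x := key

lemma gronwall_conv (hτ : ‖τ‖ = 1)
    (hF0 : ∀ x ∈ ball (0 : H) 1, F 0 x = x)
    (hFmaps : ∀ t ≥ (0 : ℝ), ∀ x ∈ ball (0 : H) 1, F t x ∈ ball (0 : H) 1)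
    (hFderiv : ∀ x ∈ ball (0 : H) 1, ∀ t ≥ (0 : ℝ),
      HasDerivWithinAt (fun s => F s x) (-(f (F t x))) (Set.Ici (0 : ℝ)) t)
    {γ : ℝ} (hiv : ∀ x ∈ ball (0:H) 1, ∀ t ≥ (0:ℝ),
      dtau τ (F t x) ≤ Real.exp (-(t * γ)) * dtau τ x)
    {x : H} (hx : x ∈ ball (0:H) 1) :
    γ ≤ 2 * (inner ℂ (xstar τ x) (f x) : ℂ).re := by
  set φ0 : ℝ := 2 * (inner ℂ (xstar τ x) (f x) : ℂ).re with hφ0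
  have hu0 : HasDerivWithinAt (fun s => dtau τ (F s x)) (-(φ0) * dtau τ x) (Ici 0) 0 := by
    have h := dtau_hasDerivF hτ hFmaps hFderiv hx (le_refl (0:ℝ))
    rw [hF0 x hx] at h
    exact h
  have hd : 0 < dtau τ x := dtau_pos hτ hx
  set ψ : ℝ → ℝ := fun s => Real.exp (-(s * γ)) * dtau τ x - dtau τ (F s x) with hψ
  have hψder : HasDerivWithinAt ψ ((φ0 - γ) * dtau τ x) (Ici 0) 0 := by
    have hexp : HasDerivAt (fun s : ℝ => Real.exp (-(s * γ))) (-γ) 0 := by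
      have h1 := (((hasDerivAt_id (0:ℝ)).mul_const γ).neg).exp
      have h2 : Real.exp ((-fun y : ℝ => id y * γ) 0) * -(1 * γ) = -γ := by simp
      rw [h2] at h1
      exact h1
    have h3 := ((hexp.mul_const (dtau τ x)).hasDerivWithinAt (s := Ici (0:ℝ))).sub hu0
    refine h3.congr_deriv ?_
    ring
  rw [hasDerivWithinAt_iff_tendsto_slope, Ici_sdiff_left] at hψder
  have hψ0 : ψ 0 = 0 := by
    simp only [hψ, zero_mul, neg_zero, Real.exp_zero, one_mul]
    rw [hF0 x hx]
    ring
  have hnonneg : ∀ᶠ s in 𝓝[>] (0:ℝ), 0 ≤ slope ψ 0 s := by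
    filter_upwards [self_mem_nhdsWithin] with s hs
    have hs' : (0:ℝ) < s := hs
    have h1 : 0 ≤ ψ s := by
      have := hiv x hx s hs'.le
      simp only [hψ]
      linarith
    rw [slope_def_field, hψ0, sub_zero, sub_zero]
    exact div_nonneg h1 hs'.le
  have hge : 0 ≤ (φ0 - γ) * dtau τ x := ge_of_tendsto hψder hnonneg
  nlinarith

end Flow
end Stmt6Aux


open Stmt6Aux in
theorem stmt6 {H : Type*} [NormedAddCommGroup H] [InnerProductSpace ℂ H] [CompleteSpace H]
    (τ : H) (hτ : ‖τ‖ = 1) (f : H → H) (F : ℝ → H → H)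
    (hmono : RhoMonotone f)
    (hlim : Tendsto (fun r : ℝ => f ((r : ℂ) • τ)) (𝓝[<] (1 : ℝ)) (𝓝 (0 : H)))
    (hF0 : ∀ x ∈ ball (0 : H) 1, F 0 x = x)
    (hFsemigroup : ∀ t ≥ (0 : ℝ), ∀ s ≥ (0 : ℝ), ∀ x ∈ ball (0 : H) 1,
      F (t + s) x = F t (F s x))
    (hFmaps : ∀ t ≥ (0 : ℝ), ∀ x ∈ ball (0 : H) 1, F t x ∈ ball (0 : H) 1)
    (hFderiv : ∀ x ∈ ball (0 : H) 1, ∀ t ≥ (0 : ℝ),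
      HasDerivWithinAt (fun s => F s x) (-(f (F t x))) (Set.Ici (0 : ℝ)) t) :
    -- (I) ↔ (II)
    ((⊥ < limsup (fun r : ℝ => ((radQuot τ f r : ℝ) : EReal)) (𝓝[<] (1 : ℝ))) ↔
        (∃ α : ℝ, Tendsto (radQuot τ f) (𝓝[<] (1 : ℝ)) (𝓝 α))) ∧
    -- (II) ↔ (III)
    ((∃ α : ℝ, Tendsto (radQuot τ f) (𝓝[<] (1 : ℝ)) (𝓝 α)) ↔
        ⊥ < betaInf τ f) ∧
    -- (III) ↔ (IV)
    ((⊥ < betaInf τ f) ↔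
        (∃ γ : ℝ, ∀ x ∈ ball (0 : H) 1, ∀ t ≥ (0 : ℝ),
          dtau τ (F t x) ≤ Real.exp (-(t * γ)) * dtau τ x)) ∧
    -- Moreover: α = β and β is the maximal γ in (IV)
    (∀ α : ℝ, Tendsto (radQuot τ f) (𝓝[<] (1 : ℝ)) (𝓝 α) →
      (α : EReal) = betaInf τ f ∧
      (∀ x ∈ ball (0 : H) 1, ∀ t ≥ (0 : ℝ),
        dtau τ (F t x) ≤ Real.exp (-(t * α)) * dtau τ x) ∧
      (∀ γ : ℝ, (∀ x ∈ ball (0 : H) 1, ∀ t ≥ (0 : ℝ),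
          dtau τ (F t x) ≤ Real.exp (-(t * γ)) * dtau τ x) → γ ≤ α)) := by
  classical
  set g : ℝ → ℝ := gfun τ f with hg
  have hIoo : ∀ᶠ r in 𝓝[<] (1:ℝ), r ∈ Ioo (0:ℝ) 1 := Ioo_mem_nhdsLT one_pos
  have hballr : ∀ r ∈ Ioo (0:ℝ) 1, (r:ℂ) • τ ∈ ball (0:H) 1 := fun r hr =>
    smul_mem_ball hτ (by rw [abs_of_nonneg hr.1.le]; exact hr.2)
  have hβle : ∀ r ∈ Ioo (0:ℝ) 1, betaInf τ f ≤ ((-(2 * g r) : ℝ) : EReal) := by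
    intro r hr
    calc betaInf τ f
        ≤ ((2 * (inner ℂ (xstar τ ((r:ℂ) • τ)) (f ((r:ℂ) • τ)) : ℂ).re : ℝ) : EReal) :=
          iInf₂_le _ (hballr r hr)
    _ = ((-(2 * g r) : ℝ) : EReal) :=
          congrArg (fun z : ℝ => (z : EReal)) (xstar_smul_re hτ f ⟨hr.1.le, hr.2⟩)
  by_cases hbdd : BddAbove (g '' Ioo 0 1)
  · -- bounded case : everything holds
    set L := sSup (g '' Ioo 0 1) with hL
    have hgL : Tendsto g (𝓝[<] (1:ℝ)) (𝓝 L) := gfun_tendsto_bdd hτ hmono hbdd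
    set α₀ : ℝ := -(2 * L) with hα₀
    have hrad : Tendsto (radQuot τ f) (𝓝[<] (1:ℝ)) (𝓝 α₀) := by
      have h1 : Tendsto (fun r : ℝ => -((1 + r) * g r)) (𝓝[<] (1:ℝ)) (𝓝 (-((1 + 1) * L))) :=
        ((tendsto_const_nhds.add (tendsto_id.mono_left nhdsWithin_le_nhds)).mul hgL).neg
      have h2 := Tendsto.congr' (hIoo.mono fun r hr => (radQuot_eq f ⟨hr.1.le, hr.2⟩).symm) h1
      convert h2 using 2
      rw [hα₀]; ring
    have hB : ∀ y ∈ ball (0:H) 1, α₀ ≤ 2 * (inner ℂ (xstar τ y) (f y) : ℂ).re := by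
      intro y hy
      have h := keyB hτ hmono hlim hgL hy
      rw [xstar_re hτ hy]
      rw [hα₀]
      linarith
    have hβge : (α₀ : EReal) ≤ betaInf τ f := by
      rw [betaInf]
      exact le_iInf₂ fun y hy => EReal.coe_le_coe_iff.mpr (hB y hy)
    have hβeq : betaInf τ f = (α₀ : EReal) := by
      refine le_antisymm ?_ hβge
      by_contra hcon
      push_neg at hcon
      have hne_top : betaInf τ f ≠ ⊤ :=
        ne_top_of_le_ne_top (EReal.coe_ne_top _) (hβle (1/2) (by norm_num))
      have hne_bot : betaInf τ f ≠ ⊥ := ((EReal.bot_lt_coe α₀).trans_le hβge).ne'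
      set b := (betaInf τ f).toReal with hb
      have hbeq : betaInf τ f = (b : EReal) := (EReal.coe_toReal hne_top hne_bot).symm
      have hub : ∀ y ∈ g '' Ioo 0 1, y ≤ -b / 2 := by
        rintro y ⟨r, hr, rfl⟩
        have h1 := hβle r hr
        rw [hbeq] at h1
        have h2 := EReal.coe_le_coe_iff.mp h1
        linarith
      have hLle : L ≤ -b / 2 :=
        csSup_le (⟨g (1/2), Set.mem_image_of_mem _ (by norm_num)⟩) hub
      rw [hbeq] at hcon
      have h3 := EReal.coe_lt_coe_iff.mp hcon
      rw [hα₀] at h3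
      linarith
    have hIV : ∀ γ : ℝ, (∀ y ∈ ball (0:H) 1, γ ≤ 2 * (inner ℂ (xstar τ y) (f y) : ℂ).re) →
        ∀ x ∈ ball (0:H) 1, ∀ t ≥ (0:ℝ), dtau τ (F t x) ≤ Real.exp (-(t * γ)) * dtau τ x :=
      fun γ hγ x hx t ht => gronwall hτ hF0 hFmaps hFderiv hγ hx ht
    have hmaxi : ∀ γ : ℝ, (∀ x ∈ ball (0:H) 1, ∀ t ≥ (0:ℝ),
        dtau τ (F t x) ≤ Real.exp (-(t * γ)) * dtau τ x) → γ ≤ α₀ := by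
      intro γ hγiv
      have h1 : ∀ r ∈ Ioo (0:ℝ) 1, g r ≤ -γ / 2 := by
        intro r hr
        have h2 := gronwall_conv hτ hF0 hFmaps hFderiv hγiv (hballr r hr)
        rw [xstar_smul_re hτ f ⟨hr.1.le, hr.2⟩] at h2
        linarith
      have h3 : L ≤ -γ / 2 :=
        csSup_le (⟨g (1/2), Set.mem_image_of_mem _ (by norm_num)⟩)
          (by rintro y ⟨r, hr, rfl⟩; exact h1 r hr)
      rw [hα₀]; linarith
    refine ⟨⟨fun _ => ⟨α₀, hrad⟩, fun _ => ?_⟩,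
      ⟨fun _ => ?_, fun _ => ⟨α₀, hrad⟩⟩,
      ⟨fun _ => ⟨α₀, hIV α₀ hB⟩, fun _ => ?_⟩, ?_⟩
    · rw [(EReal.tendsto_coe.mpr hrad).limsup_eq]
      exact EReal.bot_lt_coe _
    · rw [hβeq]; exact EReal.bot_lt_coe _
    · rw [hβeq]; exact EReal.bot_lt_coe _
    · intro α hα
      have hαeq : α = α₀ := tendsto_nhds_unique hα hrad
      refine ⟨by rw [hαeq, hβeq], ?_, ?_⟩
      · rw [hαeq]; exact hIV α₀ hB
      · intro γ hγiv; rw [hαeq]; exact hmaxi γ hγiv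
  · -- unbounded case : everything fails
    have hgtop : Tendsto g (𝓝[<] (1:ℝ)) atTop := gfun_tendsto_unbdd hτ hmono hbdd
    have hradbot : Tendsto (radQuot τ f) (𝓝[<] (1:ℝ)) atBot := by
      have h1 : Tendsto (fun r : ℝ => (1 + r) * g r) (𝓝[<] (1:ℝ)) atTop := by
        apply tendsto_atTop_mono' _ _ hgtop
        filter_upwards [hIoo, hgtop.eventually_ge_atTop 0] with r hr hgr
        nlinarith [hr.1]
      have h2 : Tendsto (fun r : ℝ => -((1 + r) * g r)) (𝓝[<] (1:ℝ)) atBot :=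
        tendsto_neg_atTop_atBot.comp h1
      exact Tendsto.congr' (hIoo.mono fun r hr => (radQuot_eq f ⟨hr.1.le, hr.2⟩).symm) h2
    have hno2 : ¬ ∃ α : ℝ, Tendsto (radQuot τ f) (𝓝[<] (1:ℝ)) (𝓝 α) := by
      rintro ⟨α, hα⟩
      exact not_tendsto_nhds_of_tendsto_atBot hradbot α hα
    have hlimsupbot : limsup (fun r : ℝ => ((radQuot τ f r : ℝ) : EReal)) (𝓝[<] (1:ℝ)) = ⊥ := by
      apply Tendsto.limsup_eq
      rw [EReal.tendsto_nhds_bot_iff_real]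
      intro M
      filter_upwards [hradbot.eventually_lt_atBot M] with r hr
      exact_mod_cast EReal.coe_lt_coe_iff.mpr hr
    have hβbot : betaInf τ f = ⊥ := by
      rw [EReal.eq_bot_iff_forall_lt]
      intro y
      obtain ⟨z, ⟨r, hr, rfl⟩, hz⟩ := not_bddAbove_iff.1 hbdd (-y / 2)
      calc betaInf τ f ≤ ((-(2 * g r) : ℝ) : EReal) := hβle r hr
      _ < (y : EReal) := EReal.coe_lt_coe_iff.mpr (by linarith)
    have hnoIV : ¬ ∃ γ : ℝ, ∀ x ∈ ball (0:H) 1, ∀ t ≥ (0:ℝ),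
        dtau τ (F t x) ≤ Real.exp (-(t * γ)) * dtau τ x := by
      rintro ⟨γ, hγiv⟩
      apply hbdd
      refine ⟨-γ / 2, ?_⟩
      rintro y ⟨r, hr, rfl⟩
      have h1 := gronwall_conv hτ hF0 hFmaps hFderiv hγiv (hballr r hr)
      rw [xstar_smul_re hτ f ⟨hr.1.le, hr.2⟩] at h1
      linarith
    refine ⟨⟨fun hI => ?_, fun hII => absurd hII hno2⟩,
      ⟨fun hII => absurd hII hno2, fun hIII => ?_⟩,
      ⟨fun hIII => ?_, fun hIV => absurd hIV hnoIV⟩, ?_⟩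
    · rw [hlimsupbot] at hI
      exact absurd hI (lt_irrefl _)
    · rw [hβbot] at hIII
      exact absurd hIII (lt_irrefl _)
    · rw [hβbot] at hIII
      exact absurd hIII (lt_irrefl _)
    · intro α hα
      exact absurd ⟨α, hα⟩ hno2
end

section
/- Let h be a holomorphic function on the open unit disk 𝔻 = {λ ∈ ℂ : |λ| < 1} with Re h(λ) ≥ 0 for all λ ∈ 𝔻. Then the limit lim_{r→1⁻} (1−r)·h(r) exists, and it is a nonnegative real number. -/
open Filter Metric Topology Complex


lemma nsq_diff (w z : ℂ) : normSq (1 - (starRingEnd ℂ) w * z) - normSq (z - w)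
    = (1 - normSq z) * (1 - normSq w) := by
  simp [Complex.normSq_apply, Complex.sub_re, Complex.sub_im, Complex.mul_re, Complex.mul_im,
    Complex.one_re, Complex.one_im, Complex.conj_re, Complex.conj_im]
  ring

lemma nsq_key (A B : ℂ) : normSq (A + (starRingEnd ℂ) B) - normSq (A - B)
    = 4 * A.re * B.re := by
  simp [Complex.normSq_apply, Complex.add_re, Complex.add_im, Complex.sub_re, Complex.sub_im,
    Complex.conj_re, Complex.conj_im]
  ring

lemma hball_aux {a b : ℂ} (hab : normSq a < normSq b) (hb : b ≠ 0) : a / b ∈ ball (0:ℂ) 1 := by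
  rw [mem_ball_zero_iff, norm_div, div_lt_one (norm_pos_iff.2 hb)]
  have ha : normSq a = ‖a‖ ^ 2 := by rw [Complex.normSq_eq_norm_sq]
  have hb2 : normSq b = ‖b‖ ^ 2 := by rw [Complex.normSq_eq_norm_sq]
  exact lt_of_pow_lt_pow_left₀ 2 (norm_nonneg b) (by rw [← ha, ← hb2]; exact hab)

lemma sp_strict (h : ℂ → ℂ) (hhol : DifferentiableOn ℂ h (ball (0:ℂ) 1))
    (hre : ∀ z ∈ ball (0:ℂ) 1, 0 < (h z).re) {z w : ℂ}
    (hz : z ∈ ball (0:ℂ) 1) (hw : w ∈ ball (0:ℂ) 1) :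
    ‖h z - h w‖ * ‖1 - (starRingEnd ℂ) w * z‖ ≤ ‖h z + (starRingEnd ℂ) (h w)‖ * ‖z - w‖ := by
  have hnz : normSq z < 1 := by
    have := mem_ball_zero_iff.1 hz
    rw [Complex.normSq_eq_norm_sq]
    nlinarith [norm_nonneg z]
  have hnw : normSq w < 1 := by
    have := mem_ball_zero_iff.1 hw
    rw [Complex.normSq_eq_norm_sq]
    nlinarith [norm_nonneg w]
  set c := h w with hc
  have hcre : 0 < c.re := hre w hw
  have h1 : ∀ ζ : ℂ, ζ ∈ ball (0:ℂ) 1 → 1 + (starRingEnd ℂ) w * ζ ≠ 0 := by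
    intro ζ hζ h0
    have h2 : ‖(starRingEnd ℂ) w * ζ‖ < 1 := by
      rw [norm_mul, RCLike.norm_conj]
      have h3 := mem_ball_zero_iff.1 hζ
      have h4 := mem_ball_zero_iff.1 hw
      nlinarith [norm_nonneg w, norm_nonneg ζ]
    have : (starRingEnd ℂ) w * ζ = -1 := by linear_combination h0 - (1:ℂ)
    rw [this] at h2; simp at h2
  set φ : ℂ → ℂ := fun ζ => (ζ + w) / (1 + (starRingEnd ℂ) w * ζ) with hφ
  have hφmem : ∀ ζ ∈ ball (0:ℂ) 1, φ ζ ∈ ball (0:ℂ) 1 := by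
    intro ζ hζ
    have hnζ : normSq ζ < 1 := by
      have := mem_ball_zero_iff.1 hζ
      rw [Complex.normSq_eq_norm_sq]
      nlinarith [norm_nonneg ζ]
    apply hball_aux _ (h1 ζ hζ)
    have hd := nsq_diff w (-ζ)
    simp only [mul_neg, sub_neg_eq_add, normSq_neg] at hd
    have : normSq (-ζ - w) = normSq (ζ + w) := by rw [show -ζ - w = -(ζ + w) by ring, normSq_neg]
    rw [this] at hd
    nlinarith [hd]
  have hφdiff : DifferentiableOn ℂ φ (ball (0:ℂ) 1) := by
    apply DifferentiableOn.div
    · exact (differentiable_id.add_const w).differentiableOn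
    · exact ((differentiable_const _).add ((differentiable_const _).mul differentiable_id)).differentiableOn
    · exact h1
  set g : ℂ → ℂ := fun ζ => (h (φ ζ) - c) / (h (φ ζ) + (starRingEnd ℂ) c) with hg
  have hgden : ∀ A : ℂ, 0 < A.re → A + (starRingEnd ℂ) c ≠ 0 := by
    intro A hA h0
    have : (A + (starRingEnd ℂ) c).re = A.re + c.re := by simp [Complex.add_re, Complex.conj_re]
    rw [h0] at this; simp at this; linarith
  have hgdiff : DifferentiableOn ℂ g (ball (0:ℂ) 1) := by
    apply DifferentiableOn.div
    · exact (hhol.comp hφdiff hφmem).sub (differentiableOn_const _)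
    · exact (hhol.comp hφdiff hφmem).add (differentiableOn_const _)
    · exact fun ζ hζ => hgden _ (hre _ (hφmem ζ hζ))
  have hgmaps : Set.MapsTo g (ball (0:ℂ) 1) (ball (0:ℂ) 1) := by
    intro ζ hζ
    have hA := hre _ (hφmem ζ hζ)
    apply hball_aux _ (hgden _ hA)
    have := nsq_key (h (φ ζ)) c
    nlinarith [this, hA, hcre]
  have hg0 : g 0 = 0 := by
    have hφ0 : φ 0 = w := by simp [hφ]
    simp [hg, hφ0, hc]
  have hden : 1 - (starRingEnd ℂ) w * z ≠ 0 := by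
    intro h0
    have h2 : ‖(starRingEnd ℂ) w * z‖ < 1 := by
      rw [norm_mul, RCLike.norm_conj]
      have h3 := mem_ball_zero_iff.1 hz
      have h4 := mem_ball_zero_iff.1 hw
      nlinarith [norm_nonneg w, norm_nonneg z]
    have : (starRingEnd ℂ) w * z = 1 := by linear_combination -h0
    rw [this] at h2; simp at h2
  set ζ₀ := (z - w) / (1 - (starRingEnd ℂ) w * z) with hζ₀def
  have hζ₀ : ζ₀ ∈ ball (0:ℂ) 1 := by
    apply hball_aux _ hden
    nlinarith [nsq_diff w z]
  have hφζ₀ : φ ζ₀ = z := by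
    rw [hφ]
    simp only
    rw [hζ₀def]
    have hinner := h1 ζ₀ hζ₀
    rw [hζ₀def] at hinner
    have hww : (1:ℂ) - w * (starRingEnd ℂ) w ≠ 0 := by
      rw [Complex.mul_conj]
      intro h0
      have := congrArg Complex.re h0
      simp at this
      linarith
    have hden' : 1 - z * (starRingEnd ℂ) w ≠ 0 := by rw [mul_comm]; exact hden
    rw [div_eq_iff hinner]
    field_simp
    ring
  have key := Complex.norm_le_norm_of_mapsTo_ball hgdiff (hgmaps.mono_right ball_subset_closedBall) hg0
    (show ‖ζ₀‖ < 1 from mem_ball_zero_iff.1 hζ₀)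
  rw [hg] at key
  simp only [hφζ₀] at key
  rw [hζ₀def, norm_div, norm_div] at key
  have hp1 : 0 < ‖h z + (starRingEnd ℂ) c‖ := by
    rw [norm_pos_iff]
    exact hgden _ (hre z hz)
  have hp2 : 0 < ‖1 - (starRingEnd ℂ) w * z‖ := by
    rw [norm_pos_iff]; exact hden
  rw [div_le_div_iff₀ hp1 hp2] at key
  simpa [mul_comm] using key

lemma sp (h : ℂ → ℂ) (hhol : DifferentiableOn ℂ h (ball (0:ℂ) 1))
    (hre : ∀ z ∈ ball (0:ℂ) 1, 0 ≤ (h z).re) {z w : ℂ}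
    (hz : z ∈ ball (0:ℂ) 1) (hw : w ∈ ball (0:ℂ) 1) :
    ‖h z - h w‖ * ‖1 - (starRingEnd ℂ) w * z‖ ≤ ‖h z + (starRingEnd ℂ) (h w)‖ * ‖z - w‖ := by
  apply le_of_forall_pos_le_add
  intro ε hε
  set δ : ℝ := ε / (2 * (‖z - w‖ + 1)) with hδdef
  have hδpos : 0 < δ := by positivity
  have key := sp_strict (fun ζ => h ζ + (δ:ℂ)) (hhol.add (differentiableOn_const _))
    (fun ζ hζ => by
      simp only [Complex.add_re, Complex.ofReal_re]
      linarith [hre ζ hζ]) hz hw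
  have e1 : h z + (δ:ℂ) - (h w + (δ:ℂ)) = h z - h w := by ring
  have e2 : h z + (δ:ℂ) + (starRingEnd ℂ) (h w + (δ:ℂ))
      = h z + (starRingEnd ℂ) (h w) + ((2*δ:ℝ):ℂ) := by
    rw [map_add, Complex.conj_ofReal]
    push_cast
    ring
  rw [e1, e2] at key
  have e3 : ‖h z + (starRingEnd ℂ) (h w) + ((2*δ:ℝ):ℂ)‖
      ≤ ‖h z + (starRingEnd ℂ) (h w)‖ + 2*δ := by
    refine (norm_add_le _ _).trans ?_
    have : ‖((2*δ:ℝ):ℂ)‖ = |2*δ| := by rw [Complex.norm_real, Real.norm_eq_abs]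
    rw [this, abs_of_pos (by positivity)]
  have e4 : 2*δ*‖z - w‖ ≤ ε := by
    have hD : (0:ℝ) < 2 * (‖z - w‖ + 1) := by positivity
    have hmul : δ * (2 * (‖z - w‖ + 1)) = ε := by
      rw [hδdef]; field_simp
    nlinarith [hmul, hδpos, norm_nonneg (z - w)]
  calc ‖h z - h w‖ * ‖1 - (starRingEnd ℂ) w * z‖
      ≤ (‖h z + (starRingEnd ℂ) (h w)‖ + 2*δ) * ‖z - w‖ :=
        key.trans (mul_le_mul_of_nonneg_right e3 (norm_nonneg _))
    _ ≤ ‖h z + (starRingEnd ℂ) (h w)‖ * ‖z - w‖ + ε := by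
        rw [add_mul]; linarith [e4]

lemma star_aux (h : ℂ → ℂ) (hhol : DifferentiableOn ℂ h (ball (0:ℂ) 1))
    (hre : ∀ z ∈ ball (0:ℂ) 1, 0 ≤ (h z).re) {z w : ℂ}
    (hz : z ∈ ball (0:ℂ) 1) (hw : w ∈ ball (0:ℂ) 1) :
    normSq (h z - h w) * ((1 - normSq z) * (1 - normSq w))
      ≤ 4 * (h z).re * (h w).re * normSq (z - w) := by
  have hsp := sp h hhol hre hz hw
  have hn : ∀ x : ℂ, ‖x‖^2 = normSq x := fun x => by
    rw [Complex.normSq_eq_norm_sq]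
  have hs : (‖h z - h w‖ * ‖1 - (starRingEnd ℂ) w * z‖)^2
      ≤ (‖h z + (starRingEnd ℂ) (h w)‖ * ‖z - w‖)^2 :=
    pow_le_pow_left₀ (by positivity) hsp 2
  rw [mul_pow, mul_pow, hn, hn, hn, hn] at hs
  have e : normSq (1 - (starRingEnd ℂ) w * z)
      = normSq (z - w) + (1 - normSq z) * (1 - normSq w) := by linarith [nsq_diff w z]
  have e2 : normSq (h z + (starRingEnd ℂ) (h w))
      = normSq (h z - h w) + 4 * (h z).re * (h w).re := by linarith [nsq_key (h z) (h w)]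
  rw [e, e2] at hs
  nlinarith [hs]

lemma star2 (h : ℂ → ℂ) (hhol : DifferentiableOn ℂ h (ball (0:ℂ) 1))
    (hre : ∀ z ∈ ball (0:ℂ) 1, 0 ≤ (h z).re) {z w : ℂ}
    (hz : z ∈ ball (0:ℂ) 1) (hw : w ∈ ball (0:ℂ) 1) :
    normSq (h z + (starRingEnd ℂ) (h w)) * ((1 - normSq z) * (1 - normSq w))
      ≤ 4 * (h z).re * (h w).re * normSq (1 - (starRingEnd ℂ) w * z) := by
  have h1 := star_aux h hhol hre hz hw
  have e : normSq (1 - (starRingEnd ℂ) w * z)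
      = normSq (z - w) + (1 - normSq z) * (1 - normSq w) := by linarith [nsq_diff w z]
  have e2 : normSq (h z + (starRingEnd ℂ) (h w))
      = normSq (h z - h w) + 4 * (h z).re * (h w).re := by linarith [nsq_key (h z) (h w)]
  rw [e, e2]
  nlinarith [h1]

lemma psi_mono (h : ℂ → ℂ) (hhol : DifferentiableOn ℂ h (ball (0 : ℂ) 1))
    (hre : ∀ z ∈ ball (0 : ℂ) 1, 0 ≤ (h z).re)
    (r s : ℝ) (hr : r ∈ Set.Ico (0:ℝ) 1) (hs : s ∈ Set.Ico (0:ℝ) 1) (hrs : r ≤ s) :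
    (1 - s)/(1 + s) * (h (s:ℂ)).re ≤ (1 - r)/(1 + r) * (h (r:ℂ)).re := by
  have hmem : ∀ t : ℝ, t ∈ Set.Ico (0:ℝ) 1 → ((t:ℝ):ℂ) ∈ ball (0:ℂ) 1 := by
    intro t ht
    rw [mem_ball_zero_iff, Complex.norm_real, Real.norm_eq_abs, _root_.abs_of_nonneg ht.1]
    exact ht.2
  set U := (h (r:ℂ)).re with hU
  set V := (h (s:ℂ)).re with hV
  have hU0 : 0 ≤ U := hre _ (hmem r hr)
  have hV0 : 0 ≤ V := hre _ (hmem s hs)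
  have key := star2 h hhol hre (hmem s hs) (hmem r hr)
  rw [Complex.conj_ofReal] at key
  have ec : (1 : ℂ) - (r:ℂ) * (s:ℂ) = ((1 - r*s : ℝ) : ℂ) := by push_cast; ring
  rw [ec, Complex.normSq_ofReal, Complex.normSq_ofReal, Complex.normSq_ofReal] at key
  have hge : (V + U)^2 ≤ normSq (h (s:ℂ) + (starRingEnd ℂ) (h (r:ℂ))) := by
    rw [Complex.normSq_apply]
    have hr1 : (h (s:ℂ) + (starRingEnd ℂ) (h (r:ℂ))).re = V + U := by
      simp [Complex.add_re, Complex.conj_re, hU, hV]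
    rw [hr1]
    nlinarith [sq_nonneg ((h (s:ℂ) + (starRingEnd ℂ) (h (r:ℂ))).im)]
  have hnn : (0:ℝ) ≤ (1 - s*s) * (1 - r*r) := by
    apply mul_nonneg <;> nlinarith [hr.1, hr.2, hs.1, hs.2]
  have key2 : (V + U)^2 * ((1 - s*s) * (1 - r*r)) ≤ 4 * V * U * ((1-r*s)*(1-r*s)) := by
    calc (V + U)^2 * ((1 - s*s) * (1 - r*r))
        ≤ normSq (h (s:ℂ) + (starRingEnd ℂ) (h (r:ℂ))) * ((1 - s*s) * (1 - r*r)) :=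
          mul_le_mul_of_nonneg_right hge hnn
      _ ≤ 4 * V * U * ((1-r*s)*(1-r*s)) := key
  have hαpos : 0 < (1 - s)*(1 + r) := by nlinarith [hs.2, hr.1]
  have hβα : (1 - s)*(1 + r) ≤ (1 + s)*(1 - r) := by nlinarith
  have hprod : ((1 + s)*(1 - r)*U - (1 - s)*(1 + r)*V) * ((1 - s)*(1 + r)*U - (1 + s)*(1 - r)*V) ≤ 0 := by
    nlinarith [key2]
  have hgoal : (1 - s)*(1 + r) * V ≤ (1 + s)*(1 - r) * U := by
    by_contra hcon
    push_neg at hcon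
    have h2 : 0 ≤ (1 - s)*(1 + r)*U - (1 + s)*(1 - r)*V := by
      by_contra h3
      push_neg at h3
      nlinarith [hprod]
    nlinarith [hcon, h2, hβα, hU0, hV0, hαpos]
  rw [div_mul_eq_mul_div, div_mul_eq_mul_div, div_le_div_iff₀ (by nlinarith [hs.1] : (0:ℝ) < 1 + s) (by nlinarith [hr.1] : (0:ℝ) < 1 + r)]
  nlinarith [hgoal]

theorem stmt7 (h : ℂ → ℂ)
    (hhol : DifferentiableOn ℂ h (ball (0 : ℂ) 1))
    (hre : ∀ z ∈ ball (0 : ℂ) 1, 0 ≤ (h z).re) :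
    ∃ a : ℝ, 0 ≤ a ∧
      Tendsto (fun r : ℝ => ((1 - r : ℝ) : ℂ) * h (r : ℂ)) (𝓝[<] (1 : ℝ)) (𝓝 (a : ℂ)) := by
  have hmem : ∀ t : ℝ, t ∈ Set.Ico (0:ℝ) 1 → ((t:ℝ):ℂ) ∈ ball (0:ℂ) 1 := by
    intro t ht
    rw [mem_ball_zero_iff, Complex.norm_real, Real.norm_eq_abs, _root_.abs_of_nonneg ht.1]
    exact ht.2
  set ψ : ℝ → ℝ := fun r => (1 - r)/(1 + r) * (h (r:ℂ)).re with hψdef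
  clear_value ψ
  have hψmono : ∀ r s : ℝ, r ∈ Set.Ico (0:ℝ) 1 → s ∈ Set.Ico (0:ℝ) 1 → r ≤ s → ψ s ≤ ψ r := by
    intro r s hr hs hrs
    rw [hψdef]
    exact psi_mono h hhol hre r s hr hs hrs
  have hψ0 : ∀ r ∈ Set.Ico (0:ℝ) 1, 0 ≤ ψ r := by
    intro r hr
    rw [hψdef]
    have h1 : (0:ℝ) < 1 + r := by linarith [hr.1]
    have h2 : (0:ℝ) ≤ 1 - r := by linarith [hr.2.le]
    exact mul_nonneg (div_nonneg h2 h1.le) (hre _ (hmem r hr))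
  set ψ' : ℝ → ℝ := fun r => ψ (max r 0) with hψ'
  have hmax : ∀ r : ℝ, r < 1 → max r 0 ∈ Set.Ico (0:ℝ) 1 :=
    fun r hr => ⟨le_max_right _ _, max_lt hr one_pos⟩
  have hne : (ψ' '' Set.Iio 1).Nonempty := ⟨ψ' 0, ⟨0, by norm_num, rfl⟩⟩
  have hbdd : BddBelow (ψ' '' Set.Iio 1) := by
    refine ⟨0, ?_⟩
    rintro x ⟨t, ht, rfl⟩
    exact hψ0 _ (hmax t ht)
  set L := sInf (ψ' '' Set.Iio 1) with hL
  have hL0 : 0 ≤ L := by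
    apply le_csInf hne
    rintro x ⟨t, ht, rfl⟩
    exact hψ0 _ (hmax t ht)
  have hLle : ∀ r ∈ Set.Ico (0:ℝ) 1, L ≤ ψ r := by
    intro r hr
    have he : ψ' r = ψ r := by rw [hψ']; simp only; rw [max_eq_left hr.1]
    exact csInf_le hbdd ⟨r, hr.2, he⟩
  have hψtend : Tendsto ψ (𝓝[<] (1:ℝ)) (𝓝 L) := by
    rw [tendsto_order]
    constructor
    · intro b hb
      filter_upwards [Ioo_mem_nhdsLT_of_mem (⟨zero_lt_one, le_refl 1⟩ : (1:ℝ) ∈ Set.Ioc 0 1)]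
        with r hr
      exact lt_of_lt_of_le hb (hLle r ⟨hr.1.le, hr.2⟩)
    · intro b hb
      obtain ⟨x, ⟨t, ht, htx⟩, hxb⟩ := exists_lt_of_csInf_lt hne hb
      have hr₀ : max t 0 ∈ Set.Ico (0:ℝ) 1 := hmax t ht
      have hψr₀ : ψ (max t 0) < b := by rw [← htx] at hxb; exact hxb
      filter_upwards [Ioo_mem_nhdsLT_of_mem (⟨hr₀.2, le_refl 1⟩ : (1:ℝ) ∈ Set.Ioc (max t 0) 1)]
        with r hr
      exact lt_of_le_of_lt
        (hψmono (max t 0) r hr₀ ⟨le_trans hr₀.1 hr.1.le, hr.2⟩ hr.1.le) hψr₀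
  clear_value ψ' L
  clear hψ' hL hne hbdd ψ'
  -- Julia-type inequality
  have hJulia : ∀ lam ∈ ball (0:ℂ) 1, L * (1 - normSq lam) ≤ (h lam).re * normSq (1 - lam) := by
    intro lam hlam
    have hnl : normSq lam < 1 := by
      have := mem_ball_zero_iff.1 hlam
      rw [Complex.normSq_eq_norm_sq]
      nlinarith [norm_nonneg lam]
    have hnl0 : 0 ≤ normSq lam := normSq_nonneg lam
    have hul : 0 ≤ (h lam).re := hre _ hlam
    have hev : ∀ r ∈ Set.Ioo (0:ℝ) 1,
        ψ r * ((1+r)^2 * (1 - normSq lam)) ≤ 4 * (h lam).re * normSq (1 - (r:ℂ)*lam) := by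
      intro r hr
      have hrIco : r ∈ Set.Ico (0:ℝ) 1 := ⟨hr.1.le, hr.2⟩
      have hur : 0 ≤ (h (r:ℂ)).re := hre _ (hmem r hrIco)
      have key := star2 h hhol hre hlam (hmem r hrIco)
      rw [Complex.conj_ofReal, Complex.normSq_ofReal] at key
      have hge : ((h (r:ℂ)).re)^2 ≤ normSq (h lam + (starRingEnd ℂ) (h (r:ℂ))) := by
        rw [Complex.normSq_apply]
        have he : (h lam + (starRingEnd ℂ) (h (r:ℂ))).re = (h lam).re + (h (r:ℂ)).re := by
          simp [Complex.add_re, Complex.conj_re]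
        rw [he]
        nlinarith [sq_nonneg ((h lam + (starRingEnd ℂ) (h (r:ℂ))).im), hul, hur]
      have hnn2 : (0:ℝ) ≤ (1 - normSq lam) * (1 - r*r) :=
        mul_nonneg (by linarith) (by nlinarith [hr.1.le, hr.2.le])
      have key2 : ((h (r:ℂ)).re)^2 * ((1 - normSq lam) * (1 - r*r))
          ≤ 4 * (h lam).re * (h (r:ℂ)).re * normSq (1 - (r:ℂ)*lam) :=
        le_trans (mul_le_mul_of_nonneg_right hge hnn2) key
      have hnsqp : (0:ℝ) ≤ normSq (1 - (r:ℂ)*lam) := normSq_nonneg _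
      rcases eq_or_lt_of_le hur with h0 | hpos
      · have : ψ r = 0 := by rw [hψdef]; simp only; rw [← h0]; ring
        rw [this, zero_mul]
        positivity
      · rw [← mul_le_mul_iff_of_pos_right hpos]
        have h1r : (0:ℝ) < 1 + r := by linarith [hr.1]
        calc ψ r * ((1+r)^2 * (1 - normSq lam)) * (h (r:ℂ)).re
            = ((h (r:ℂ)).re)^2 * ((1 - normSq lam) * (1 - r*r)) := by
              rw [hψdef]; field_simp; ring
          _ ≤ 4 * (h lam).re * (h (r:ℂ)).re * normSq (1 - (r:ℂ)*lam) := key2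
          _ = 4 * (h lam).re * normSq (1 - (r:ℂ)*lam) * (h (r:ℂ)).re := by ring
    have ht1 : Tendsto (fun r : ℝ => ψ r * ((1+r)^2 * (1 - normSq lam))) (𝓝[<](1:ℝ))
        (𝓝 (L * ((1+1)^2 * (1 - normSq lam)))) := by
      apply hψtend.mul
      apply Tendsto.mono_left _ nhdsWithin_le_nhds
      exact Continuous.tendsto (((continuous_const.add continuous_id).pow 2).mul continuous_const) 1
    have ht2 : Tendsto (fun r : ℝ => 4 * (h lam).re * normSq (1 - (r:ℂ)*lam)) (𝓝[<](1:ℝ))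
        (𝓝 (4 * (h lam).re * normSq (1 - lam))) := by
      apply Tendsto.mono_left _ nhdsWithin_le_nhds
      have hc : Continuous fun r : ℝ => 4 * (h lam).re * normSq (1 - (r:ℂ)*lam) := by
        apply continuous_const.mul
        exact Complex.continuous_normSq.comp
          (continuous_const.sub (Complex.continuous_ofReal.mul continuous_const))
      have := hc.tendsto 1
      simpa using this
    have hfin := le_of_tendsto_of_tendsto ht1 ht2
      (eventually_of_mem (Ioo_mem_nhdsLT_of_mem (⟨zero_lt_one, le_refl 1⟩ : (1:ℝ) ∈ Set.Ioc 0 1))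
        hev)
    linarith [hfin]
  -- subtract the extremal part
  have hone : ∀ z ∈ ball (0:ℂ) 1, (1:ℂ) - z ≠ 0 := by
    intro z hz h0
    have hz1 : z = 1 := by linear_combination -h0
    rw [hz1, mem_ball_zero_iff] at hz
    simp only [norm_one] at hz
    exact lt_irrefl 1 hz
  set H : ℂ → ℂ := fun z => h z - (L:ℂ) * (1 + z) / (1 - z) with hHdef
  clear_value H
  have hHdiff : DifferentiableOn ℂ H (ball (0:ℂ) 1) := by
    rw [hHdef]
    apply hhol.sub
    apply DifferentiableOn.div
    · exact (differentiableOn_const _).mul ((differentiableOn_const _).add differentiableOn_id)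
    · exact (differentiableOn_const _).sub differentiableOn_id
    · exact hone
  have hre' : ∀ z : ℂ, ((L:ℂ)*(1+z)/(1-z)).re = L * ((1 - normSq z)/normSq (1-z)) := by
    intro z
    rw [mul_div_assoc, Complex.re_ofReal_mul]
    congr 1
    rw [Complex.div_re, ← add_div]
    congr 1
    simp [Complex.normSq_apply, Complex.add_re, Complex.add_im, Complex.sub_re, Complex.sub_im]
    ring
  have hHre : ∀ z ∈ ball (0:ℂ) 1, 0 ≤ (H z).re := by
    intro z hz
    rw [hHdef]
    simp only [Complex.sub_re]
    rw [hre' z]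
    have hnsq : 0 < normSq (1 - z) := normSq_pos.2 (hone z hz)
    have hj := hJulia z hz
    rw [sub_nonneg, ← mul_div_assoc, div_le_iff₀ hnsq]
    exact hj
  have hHψ : ∀ r ∈ Set.Ico (0:ℝ) 1, (1 - r)/(1 + r) * (H (r:ℂ)).re = ψ r - L := by
    intro r hr
    have h1r : (1:ℝ) - r ≠ 0 := by have := hr.2; intro hc; linarith [hr.2, (by linarith : r = 1)]
    have h1r' : (0:ℝ) < 1 + r := by linarith [hr.1]
    rw [hHdef]
    simp only [Complex.sub_re]
    rw [hre' ((r:ℝ):ℂ)]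
    have e1 : normSq ((r:ℝ):ℂ) = r * r := Complex.normSq_ofReal r
    have e2 : normSq (1 - ((r:ℝ):ℂ)) = (1-r)*(1-r) := by
      rw [show (1:ℂ) - ((r:ℝ):ℂ) = ((1-r:ℝ):ℂ) by push_cast; ring, Complex.normSq_ofReal]
    rw [e1, e2, hψdef]
    field_simp
    ring
  -- final bound
  have hbound : ∀ r ∈ Set.Ioo (0:ℝ) 1,
      ‖((1-r:ℝ):ℂ) * H ((r:ℝ):ℂ)‖ ≤ (1-r)*‖H 0‖ + 2*Real.sqrt ((H 0).re * (ψ r - L)) := by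
    intro r hr
    have hrIco : r ∈ Set.Ico (0:ℝ) 1 := ⟨hr.1.le, hr.2⟩
    have h0mem : (0:ℂ) ∈ ball (0:ℂ) 1 := mem_ball_self one_pos
    have key := star_aux H hHdiff hHre (hmem r hrIco) h0mem
    simp only [normSq_zero, sub_zero, mul_one, Complex.normSq_ofReal] at key
    -- key : normSq (H r - H 0) * ((1 - r*r) * (1 - 0)) ≤ 4 (H r).re (H 0).re * (r*r)
    have hv0 : 0 ≤ (H 0).re := hHre 0 h0mem
    have hvr : 0 ≤ (H ((r:ℝ):ℂ)).re := hHre _ (hmem r hrIco)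
    have hq : (1-r)^2 * normSq (H ((r:ℝ):ℂ) - H 0) ≤ 4 * (H 0).re * (ψ r - L) := by
      have e1 : ψ r - L = (1-r)/(1+r) * (H ((r:ℝ):ℂ)).re := (hHψ r hrIco).symm
      rw [e1]
      have h1r' : (0:ℝ) < 1 + r := by linarith [hr.1]
      have hd : (0:ℝ) ≤ (1-r)/(1+r) := div_nonneg (by linarith [hr.2.le]) h1r'.le
      have hid : (1-r)^2 = (1-r)/(1+r) * (1 - r*r) := by field_simp; ring
      have hkey2 : normSq (H ((r:ℝ):ℂ) - H 0) * (1 - r*r) ≤ 4 * (H ((r:ℝ):ℂ)).re * (H 0).re := by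
        have hrr : (0:ℝ) ≤ 1 - r*r := by nlinarith [hr.1.le, hr.2.le]
        have h4 : (0:ℝ) ≤ 4 * (H ((r:ℝ):ℂ)).re * (H 0).re :=
          mul_nonneg (mul_nonneg (by norm_num : (0:ℝ) ≤ 4) hvr) hv0
        have h5 := mul_nonneg h4 hrr
        nlinarith [key, h5]
      calc (1-r)^2 * normSq (H ((r:ℝ):ℂ) - H 0)
          = (1-r)/(1+r) * (normSq (H ((r:ℝ):ℂ) - H 0) * (1 - r*r)) := by rw [hid]; ring
        _ ≤ (1-r)/(1+r) * (4 * (H ((r:ℝ):ℂ)).re * (H 0).re) :=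
            mul_le_mul_of_nonneg_left hkey2 hd
        _ = 4 * (H 0).re * ((1-r)/(1+r) * (H ((r:ℝ):ℂ)).re) := by ring
    have hnorm1 : ‖((1-r:ℝ):ℂ) * H ((r:ℝ):ℂ)‖ = (1-r) * ‖H ((r:ℝ):ℂ)‖ := by
      rw [norm_mul, Complex.norm_real, Real.norm_eq_abs, _root_.abs_of_nonneg (by linarith [hr.2.le])]
    have htri : ‖H ((r:ℝ):ℂ)‖ ≤ ‖H 0‖ + ‖H ((r:ℝ):ℂ) - H 0‖ := by
      calc ‖H ((r:ℝ):ℂ)‖ = ‖H 0 + (H ((r:ℝ):ℂ) - H 0)‖ := by rw [add_sub_cancel]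
        _ ≤ ‖H 0‖ + ‖H ((r:ℝ):ℂ) - H 0‖ := norm_add_le _ _
    have hsq : (1-r) * ‖H ((r:ℝ):ℂ) - H 0‖ ≤ 2 * Real.sqrt ((H 0).re * (ψ r - L)) := by
      have h1 : (1-r) * ‖H ((r:ℝ):ℂ) - H 0‖
          = Real.sqrt ((1-r)^2 * normSq (H ((r:ℝ):ℂ) - H 0)) := by
        rw [Real.sqrt_mul (sq_nonneg _), Real.sqrt_sq (by linarith [hr.2.le]),
          Complex.normSq_eq_norm_sq, Real.sqrt_sq (norm_nonneg _)]
      have h2 : Real.sqrt (4 * ((H 0).re * (ψ r - L))) = 2 * Real.sqrt ((H 0).re * (ψ r - L)) := by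
        rw [show (4:ℝ) = 2^2 by norm_num, Real.sqrt_mul (sq_nonneg 2), Real.sqrt_sq (by norm_num : (0:ℝ) ≤ 2)]
      rw [h1, ← h2]
      exact Real.sqrt_le_sqrt (by linarith [hq])
    rw [hnorm1]
    calc (1-r) * ‖H ((r:ℝ):ℂ)‖ ≤ (1-r) * (‖H 0‖ + ‖H ((r:ℝ):ℂ) - H 0‖) :=
          mul_le_mul_of_nonneg_left htri (by linarith [hr.2.le])
      _ = (1-r) * ‖H 0‖ + (1-r) * ‖H ((r:ℝ):ℂ) - H 0‖ := by ring
      _ ≤ (1-r) * ‖H 0‖ + 2 * Real.sqrt ((H 0).re * (ψ r - L)) := by linarith [hsq]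
  have hψtend0 : Tendsto (fun r => ψ r - L) (𝓝[<](1:ℝ)) (𝓝 0) := by
    simpa using hψtend.sub (tendsto_const_nhds : Tendsto (fun _ : ℝ => L) _ _)
  have hbtend : Tendsto (fun r => (1-r)*‖H 0‖ + 2*Real.sqrt ((H 0).re * (ψ r - L)))
      (𝓝[<](1:ℝ)) (𝓝 0) := by
    have t1 : Tendsto (fun r : ℝ => (1-r)*‖H 0‖) (𝓝[<](1:ℝ)) (𝓝 0) := by
      apply Tendsto.mono_left _ nhdsWithin_le_nhds
      have hc : Continuous fun r : ℝ => (1-r)*‖H 0‖ :=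
        (continuous_const.sub continuous_id).mul continuous_const
      have := hc.tendsto 1
      simpa using this
    have t2 : Tendsto (fun r => 2*Real.sqrt ((H 0).re * (ψ r - L))) (𝓝[<](1:ℝ)) (𝓝 0) := by
      have ti : Tendsto (fun r => (H 0).re * (ψ r - L)) (𝓝[<](1:ℝ)) (𝓝 0) := by
        simpa using hψtend0.const_mul ((H 0).re)
      have ts := (Real.continuous_sqrt.tendsto 0).comp ti
      rw [Real.sqrt_zero] at ts
      simpa using ts.const_mul 2
    simpa using t1.add t2
  have hHtend : Tendsto (fun r : ℝ => ((1-r:ℝ):ℂ) * H ((r:ℝ):ℂ)) (𝓝[<](1:ℝ)) (𝓝 0) :=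
    squeeze_zero_norm'
      (eventually_of_mem (Ioo_mem_nhdsLT_of_mem (⟨zero_lt_one, le_refl 1⟩ : (1:ℝ) ∈ Set.Ioc 0 1))
        hbound) hbtend
  refine ⟨2*L, by linarith, ?_⟩
  have heq : (fun r : ℝ => ((1-r:ℝ):ℂ) * H ((r:ℝ):ℂ) + ((L*(1+r):ℝ):ℂ))
      =ᶠ[𝓝[<](1:ℝ)] (fun r : ℝ => ((1 - r:ℝ):ℂ) * h ((r:ℝ):ℂ)) := by
    filter_upwards [Ioo_mem_nhdsLT_of_mem (⟨zero_lt_one, le_refl 1⟩ : (1:ℝ) ∈ Set.Ioc 0 1)]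
      with r hr
    have hone' : (1:ℂ) - ((r:ℝ):ℂ) ≠ 0 := by
      rw [show (1:ℂ) - ((r:ℝ):ℂ) = ((1-r:ℝ):ℂ) by push_cast; ring, Complex.ofReal_ne_zero]
      linarith [hr.2]
    rw [hHdef]
    push_cast
    field_simp
    ring
  have hctend : Tendsto (fun r : ℝ => ((L*(1+r):ℝ):ℂ)) (𝓝[<](1:ℝ)) (𝓝 ((2*L:ℝ):ℂ)) := by
    apply Tendsto.mono_left _ nhdsWithin_le_nhds
    have hc : Continuous fun r : ℝ => ((L*(1+r):ℝ):ℂ) :=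
      Complex.continuous_ofReal.comp (continuous_const.mul (continuous_const.add continuous_id))
    have := hc.tendsto 1
    simpa [show L*(1+1) = 2*L by ring] using this
  have hsum := hHtend.add hctend
  rw [zero_add] at hsum
  exact Tendsto.congr' heq hsum
end

section
/- Let H be a complex Hilbert space, B its open unit ball, τ ∈ H a unit vector, f : B → H a ρ-monotone mapping with strong radial limit lim_{r→1⁻} f(rτ) = 0, and {F_t}_{t≥0} a flow on B generated by f. If the limit α := lim_{r→1⁻} Re⟨f(rτ), τ⟩/(r−1) exists and α > 0, then for each t > 0 the mapping F_t has no fixed point in B, i.e., F_t(x) ≠ x for every x ∈ B. -/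
open Filter Metric Topology

/-- Key boundary inequality derived from ρ-monotonicity and the radial limits. -/
theorem key_ineq {H : Type*} [NormedAddCommGroup H] [InnerProductSpace ℂ H]
    (τ : H) (hτ : ‖τ‖ = 1) (f : H → H) (α : ℝ)
    (hmono : ∀ x ∈ ball (0 : H) 1, ∀ y ∈ ball (0 : H) 1,
      (((inner ℂ y (f x) : ℂ) + (inner ℂ (f y) x : ℂ)) / (1 - (inner ℂ y x : ℂ))).re ≤
        ((inner ℂ x (f x) : ℂ) / (1 - (‖x‖ : ℂ) ^ 2)
          + (inner ℂ (f y) y : ℂ) / (1 - (‖y‖ : ℂ) ^ 2)).re)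
    (hlim : Tendsto (fun r : ℝ => f ((r : ℂ) • τ)) (𝓝[<] (1 : ℝ)) (𝓝 (0 : H)))
    (hα : Tendsto (fun r : ℝ => (inner ℂ τ (f ((r : ℂ) • τ)) : ℂ).re / (r - 1))
      (𝓝[<] (1 : ℝ)) (𝓝 α))
    (x : H) (hx : x ∈ ball (0 : H) 1) :
    ((inner ℂ τ (f x) : ℂ) / (1 - (inner ℂ τ x : ℂ))).re ≤
      ((inner ℂ x (f x) : ℂ) / (1 - (‖x‖ : ℂ) ^ 2)).re - α / 2 := by
  have hxlt : ‖x‖ < 1 := by simpa [mem_ball, dist_eq_norm] using hx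
  have habs : ‖(inner ℂ τ x : ℂ)‖ < 1 := by
    calc ‖(inner ℂ τ x : ℂ)‖ = ‖(inner ℂ τ x : ℂ)‖ := rfl
      _ ≤ ‖τ‖ * ‖x‖ := norm_inner_le_norm τ x
      _ < 1 := by rw [hτ, one_mul]; exact hxlt
  have hBne : (1 : ℂ) - (inner ℂ τ x : ℂ) ≠ 0 := by
    intro h
    have : (inner ℂ τ x : ℂ) = 1 := by linear_combination -h
    rw [this] at habs; simp at habs
  set l := 𝓝[<] (1 : ℝ) with hl
  have hev : ∀ᶠ r : ℝ in l, r ∈ Set.Ioo (0 : ℝ) 1 := by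
    have : Set.Ioo (0 : ℝ) 1 ∈ l := Ioo_mem_nhdsLT_of_mem (by constructor <;> norm_num)
    exact this
  have hmemball : ∀ r : ℝ, r ∈ Set.Ioo (0 : ℝ) 1 → ((r : ℂ) • τ) ∈ ball (0 : H) 1 := by
    intro r hr
    have : ‖(r : ℂ) • τ‖ = |r| := by
      rw [norm_smul, hτ, mul_one, Complex.norm_real, Real.norm_eq_abs]
    simp only [mem_ball, dist_zero_right, this]
    rw [abs_of_pos hr.1]; exact hr.2
  -- limit of r → (r:ℂ)
  have hrC : Tendsto (fun r : ℝ => (r : ℂ)) l (𝓝 (1 : ℂ)) := by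
    have : Tendsto (fun r : ℝ => (r : ℂ)) (𝓝 (1:ℝ)) (𝓝 (1 : ℂ)) := by
      simpa using (Complex.continuous_ofReal.tendsto 1)
    exact this.mono_left nhdsWithin_le_nhds
  -- LHS limit
  have hnum : Tendsto (fun r : ℝ => (r : ℂ) * (inner ℂ τ (f x) : ℂ)
      + (inner ℂ (f ((r : ℂ) • τ)) x : ℂ)) l (𝓝 ((inner ℂ τ (f x) : ℂ))) := by
    have h1 : Tendsto (fun r : ℝ => (r : ℂ) * (inner ℂ τ (f x) : ℂ)) l
        (𝓝 ((inner ℂ τ (f x) : ℂ))) := by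
      simpa using hrC.mul tendsto_const_nhds
    have hc : Continuous fun v : H => (inner ℂ v x : ℂ) := continuous_id.inner continuous_const
    have h2 : Tendsto (fun r : ℝ => (inner ℂ (f ((r : ℂ) • τ)) x : ℂ)) l (𝓝 0) := by
      have := (hc.tendsto 0).comp hlim
      simpa [Function.comp_def] using this
    simpa using h1.add h2
  have hden : Tendsto (fun r : ℝ => (1 : ℂ) - (r : ℂ) * (inner ℂ τ x : ℂ)) l
      (𝓝 ((1 : ℂ) - (inner ℂ τ x : ℂ))) := by
    simpa using tendsto_const_nhds.sub (hrC.mul tendsto_const_nhds)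
  have hg1 : Tendsto (fun r : ℝ =>
      (((inner ℂ ((r:ℂ) • τ) (f x) : ℂ) + (inner ℂ (f ((r:ℂ) • τ)) x : ℂ)) /
        (1 - (inner ℂ ((r:ℂ) • τ) x : ℂ))).re) l
      (𝓝 (((inner ℂ τ (f x) : ℂ) / (1 - (inner ℂ τ x : ℂ))).re)) := by
    have : Tendsto (fun r : ℝ =>
        ((r : ℂ) * (inner ℂ τ (f x) : ℂ) + (inner ℂ (f ((r:ℂ) • τ)) x : ℂ)) /
          ((1 : ℂ) - (r : ℂ) * (inner ℂ τ x : ℂ))) l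
        (𝓝 ((inner ℂ τ (f x) : ℂ) / (1 - (inner ℂ τ x : ℂ)))) := hnum.div hden hBne
    have := (Complex.continuous_re.tendsto _).comp this
    convert this using 2 with r
    rw [inner_smul_left, inner_smul_left, Complex.conj_ofReal]
    rfl
  -- RHS second-term limit
  have hcoef : Tendsto (fun r : ℝ => -(r / (1 + r))) l (𝓝 (-(1/2 : ℝ))) := by
    have : ContinuousAt (fun r : ℝ => -(r / (1 + r))) 1 := by
      apply ContinuousAt.neg
      exact (continuousAt_id.div (continuousAt_const.add continuousAt_id) (by norm_num))
    have h2 : -((1:ℝ)/(1+1)) = -(1/2 : ℝ) := by norm_num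
    rw [← h2]
    exact (this.tendsto).mono_left nhdsWithin_le_nhds
  have hsec : Tendsto (fun r : ℝ =>
      ((inner ℂ (f ((r:ℂ) • τ)) ((r:ℂ) • τ) : ℂ) / (1 - (‖(r:ℂ) • τ‖ : ℂ) ^ 2)).re) l
      (𝓝 (-(α/2))) := by
    have hmul : Tendsto (fun r : ℝ =>
        (-(r / (1 + r))) * ((inner ℂ τ (f ((r : ℂ) • τ)) : ℂ).re / (r - 1))) l
        (𝓝 (-(α/2))) := by
      rw [show -(α/2) = (-(1/2:ℝ)) * α by ring]
      exact hcoef.mul hα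
    have heq : ∀ᶠ r : ℝ in l,
        (-(r / (1 + r))) * ((inner ℂ τ (f ((r : ℂ) • τ)) : ℂ).re / (r - 1)) =
        ((inner ℂ (f ((r:ℂ) • τ)) ((r:ℂ) • τ) : ℂ) / (1 - (‖(r:ℂ) • τ‖ : ℂ) ^ 2)).re := by
      filter_upwards [hev] with r hr
      have hnorm : ‖(r : ℂ) • τ‖ = r := by
        rw [norm_smul, hτ, mul_one, Complex.norm_real, Real.norm_eq_abs, abs_of_pos hr.1]
      rw [hnorm]
      have hre : (inner ℂ (f ((r:ℂ) • τ)) ((r:ℂ) • τ) : ℂ).re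
          = r * (inner ℂ τ (f ((r:ℂ) • τ)) : ℂ).re := by
        have h1 : (inner ℂ (f ((r:ℂ)•τ)) ((r:ℂ)•τ) : ℂ)
            = starRingEnd ℂ ((r:ℂ) * (inner ℂ τ (f ((r:ℂ)•τ)) : ℂ)) := by
          rw [← inner_conj_symm, inner_smul_left, Complex.conj_ofReal]
        rw [h1, Complex.conj_re, Complex.mul_re]
        simp
      have hcast : (1 : ℂ) - (r : ℂ) ^ 2 = ((1 - r^2 : ℝ) : ℂ) := by push_cast; ring
      rw [hcast, Complex.div_ofReal_re, hre]
      have h1 : r - 1 ≠ 0 := by nlinarith [hr.2]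
      have h2 : 1 + r ≠ 0 := by nlinarith [hr.1]
      have h3 : 1 - r^2 ≠ 0 := by nlinarith [hr.1, hr.2]
      field_simp
      ring
    exact Tendsto.congr' heq hmul
  have hg2 : Tendsto (fun r : ℝ =>
      ((inner ℂ x (f x) : ℂ) / (1 - (‖x‖ : ℂ) ^ 2)
        + (inner ℂ (f ((r:ℂ) • τ)) ((r:ℂ) • τ) : ℂ) / (1 - (‖(r:ℂ) • τ‖ : ℂ) ^ 2)).re) l
      (𝓝 (((inner ℂ x (f x) : ℂ) / (1 - (‖x‖ : ℂ) ^ 2)).re - α/2)) := by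
    have hadd := (tendsto_const_nhds (x := ((inner ℂ x (f x) : ℂ) / (1 - (‖x‖ : ℂ) ^ 2)).re)
      (f := l)).add hsec
    simpa [sub_eq_add_neg] using Tendsto.congr (fun r => (Complex.add_re _ _).symm) hadd
  -- compare
  have hle : ∀ᶠ r : ℝ in l,
      (((inner ℂ ((r:ℂ) • τ) (f x) : ℂ) + (inner ℂ (f ((r:ℂ) • τ)) x : ℂ)) /
        (1 - (inner ℂ ((r:ℂ) • τ) x : ℂ))).re ≤
      ((inner ℂ x (f x) : ℂ) / (1 - (‖x‖ : ℂ) ^ 2)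
        + (inner ℂ (f ((r:ℂ) • τ)) ((r:ℂ) • τ) : ℂ) / (1 - (‖(r:ℂ) • τ‖ : ℂ) ^ 2)).re := by
    filter_upwards [hev] with r hr
    exact hmono x hx ((r:ℂ) • τ) (hmemball r hr)
  exact le_of_tendsto_of_tendsto hg1 hg2 hle

/-- real part of a quotient expressed via inner products on ℂ. -/
theorem div_re_eq_aux (z w : ℂ) (hz : z ≠ 0) :
    (w / z).re = (1/2) * (((inner ℂ z z : ℂ).re)⁻¹ *
      (((inner ℂ z w : ℂ) + (inner ℂ w z : ℂ)).re)) := by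
  have h : Complex.normSq z ≠ 0 := by simpa using hz
  have h1 : (inner ℂ z z : ℂ).re = Complex.normSq z := by
    simp [RCLike.inner_apply, Complex.mul_re, ← Complex.ofReal_pow, Complex.sq_norm, Complex.normSq_apply]
  have h2 : ((inner ℂ z w : ℂ) + (inner ℂ w z : ℂ)).re = 2 * (w.re * z.re + w.im * z.im) := by
    simp [RCLike.inner_apply, Complex.add_re, Complex.mul_re]
    ring
  rw [h1, h2, Complex.div_re]
  field_simp [Complex.normSq_apply] at *

theorem stmt10 {H : Type*} [NormedAddCommGroup H] [InnerProductSpace ℂ H] [CompleteSpace H]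
    (τ : H) (hτ : ‖τ‖ = 1) (f : H → H) (F : ℝ → H → H) (α : ℝ)
    (hmono : RhoMonotone f)
    (hlim : Tendsto (fun r : ℝ => f ((r : ℂ) • τ)) (𝓝[<] (1 : ℝ)) (𝓝 (0 : H)))
    (hF0 : ∀ x ∈ ball (0 : H) 1, F 0 x = x)
    (hFsemigroup : ∀ t ≥ (0 : ℝ), ∀ s ≥ (0 : ℝ), ∀ x ∈ ball (0 : H) 1,
      F (t + s) x = F t (F s x))
    (hFmaps : ∀ t ≥ (0 : ℝ), ∀ x ∈ ball (0 : H) 1, F t x ∈ ball (0 : H) 1)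
    (hFderiv : ∀ x ∈ ball (0 : H) 1, ∀ t ≥ (0 : ℝ),
      HasDerivWithinAt (fun s => F s x) (-(f (F t x))) (Set.Ici (0 : ℝ)) t)
    (hα : Tendsto (fun r : ℝ => (inner ℂ τ (f ((r : ℂ) • τ)) : ℂ).re / (r - 1))
      (𝓝[<] (1 : ℝ)) (𝓝 α))
    (hαpos : 0 < α) :
    ∀ t > (0 : ℝ), ∀ x ∈ ball (0 : H) 1, F t x ≠ x := by
  intro t ht x hx heq
  set u : ℝ → H := fun s => F s x with hu_def
  have hx0 : u 0 = x := hF0 x hx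
  have hxt : u t = x := heq
  have humem : ∀ s ∈ Set.Icc (0:ℝ) t, u s ∈ ball (0:H) 1 := fun s hs => hFmaps s hs.1 x hx
  have hu : ∀ s ∈ Set.Icc (0:ℝ) t, HasDerivWithinAt u (-(f (u s))) (Set.Icc 0 t) s :=
    fun s hs => (hFderiv x hx s hs.1).mono Set.Icc_subset_Ici_self
  set a : ℝ → ℂ := fun s => 1 - (inner ℂ τ (u s) : ℂ) with ha_def
  set A : ℝ → ℂ := fun s => (inner ℂ τ (f (u s)) : ℂ) with hA_def
  -- a s ≠ 0
  have hane : ∀ s ∈ Set.Icc (0:ℝ) t, a s ≠ 0 := by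
    intro s hs h0
    have hn : ‖u s‖ < 1 := by simpa [mem_ball, dist_eq_norm] using humem s hs
    have habs : ‖(inner ℂ τ (u s) : ℂ)‖ < 1 := by
      calc ‖(inner ℂ τ (u s) : ℂ)‖ = ‖(inner ℂ τ (u s) : ℂ)‖ := rfl
        _ ≤ ‖τ‖ * ‖u s‖ := norm_inner_le_norm τ (u s)
        _ < 1 := by rw [hτ, one_mul]; exact hn
    have : (inner ℂ τ (u s) : ℂ) = 1 := by
      have := h0
      simp only [ha_def, sub_eq_zero] at this
      exact this.symm
    rw [this] at habs; simp at habs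
  -- derivative of a
  have ha : ∀ s ∈ Set.Icc (0:ℝ) t, HasDerivWithinAt a (A s) (Set.Icc 0 t) s := by
    intro s hs
    have h1 : HasDerivWithinAt (fun s => (inner ℂ τ (u s) : ℂ)) (-(A s)) (Set.Icc 0 t) s := by
      have := (hasDerivWithinAt_const s (Set.Icc (0:ℝ) t) τ).inner ℂ (hu s hs)
      simpa [inner_neg_right] using this
    simpa using h1.const_sub 1
  -- w1, w2 and derivatives
  set w1 : ℝ → ℝ := fun s => ((inner ℂ (a s) (a s) : ℂ)).re with hw1_def
  set w2 : ℝ → ℝ := fun s => 1 - ((inner ℂ (u s) (u s) : ℂ)).re with hw2_def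
  set d1 : ℝ → ℝ := fun s => (((inner ℂ (a s) (A s) : ℂ)) + ((inner ℂ (A s) (a s) : ℂ))).re
    with hd1_def
  set d2 : ℝ → ℝ := fun s => 2 * (inner ℂ (u s) (f (u s)) : ℂ).re with hd2_def
  have hw1 : ∀ s ∈ Set.Icc (0:ℝ) t, HasDerivWithinAt w1 (d1 s) (Set.Icc 0 t) s := by
    intro s hs
    have h1 := (ha s hs).inner ℂ (ha s hs)
    exact Complex.reCLM.hasFDerivAt.comp_hasDerivWithinAt s h1
  have hsymm : ∀ v w : H, (inner ℂ v w : ℂ).re = (inner ℂ w v : ℂ).re := by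
    intro v w
    rw [show (inner ℂ v w : ℂ) = starRingEnd ℂ (inner ℂ w v : ℂ) from (inner_conj_symm _ _).symm,
      Complex.conj_re]
  have hw2 : ∀ s ∈ Set.Icc (0:ℝ) t, HasDerivWithinAt w2 (d2 s) (Set.Icc 0 t) s := by
    intro s hs
    have h1 := (hu s hs).inner ℂ (hu s hs)
    have h2 := Complex.reCLM.hasFDerivAt.comp_hasDerivWithinAt s h1
    have h3 := h2.const_sub 1
    have heqd : -(((inner ℂ (u s) (-(f (u s))) : ℂ) + (inner ℂ (-(f (u s))) (u s) : ℂ)).re)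
        = d2 s := by
      simp only [inner_neg_right, inner_neg_left, Complex.add_re, Complex.neg_re, hd2_def]
      rw [hsymm (f (u s)) (u s)]
      ring
    rw [← heqd]
    exact h3
  -- positivity
  have hw1pos : ∀ s ∈ Set.Icc (0:ℝ) t, 0 < w1 s := by
    intro s hs
    have : w1 s = Complex.normSq (a s) := by
      simp [hw1_def, RCLike.inner_apply, Complex.mul_re, ← Complex.ofReal_pow, Complex.sq_norm, Complex.normSq_apply]
    rw [this]
    exact Complex.normSq_pos.mpr (hane s hs)
  have hnormu : ∀ s ∈ Set.Icc (0:ℝ) t, ((inner ℂ (u s) (u s) : ℂ)).re = ‖u s‖^2 := by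
    intro s hs
    rw [inner_self_eq_norm_sq_to_K]
    simp [← Complex.ofReal_pow]
  have hw2pos : ∀ s ∈ Set.Icc (0:ℝ) t, 0 < w2 s := by
    intro s hs
    have hn : ‖u s‖ < 1 := by simpa [mem_ball, dist_eq_norm] using humem s hs
    have : w2 s = 1 - ‖u s‖^2 := by simp only [hw2_def]; rw [hnormu s hs]
    rw [this]
    nlinarith [norm_nonneg (u s)]
  -- Φ and its derivative
  set Φ : ℝ → ℝ := fun s => (1/2) * Real.log (w1 s) - (1/2) * Real.log (w2 s) with hΦ_def
  set D : ℝ → ℝ := fun s => (1/2) * ((w1 s)⁻¹ * d1 s) - (1/2) * ((w2 s)⁻¹ * d2 s) with hD_def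
  have hΦd : ∀ s ∈ Set.Icc (0:ℝ) t, HasDerivWithinAt Φ (D s) (Set.Icc 0 t) s := by
    intro s hs
    have h1 := ((Real.hasDerivAt_log (ne_of_gt (hw1pos s hs))).comp_hasDerivWithinAt s
      (hw1 s hs)).const_mul (1/2 : ℝ)
    have h2 := ((Real.hasDerivAt_log (ne_of_gt (hw2pos s hs))).comp_hasDerivWithinAt s
      (hw2 s hs)).const_mul (1/2 : ℝ)
    simpa [hΦ_def, hD_def, Function.comp, Pi.sub_def] using h1.sub h2
  -- derivative bound
  have hDle : ∀ s ∈ Set.Icc (0:ℝ) t, D s ≤ -(α/2) := by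
    intro s hs
    have hkey := key_ineq τ hτ f α hmono hlim hα (u s) (humem s hs)
    have hid1 : (1/2) * ((w1 s)⁻¹ * d1 s) = (A s / a s).re :=
      (div_re_eq_aux (a s) (A s) (hane s hs)).symm
    have hn : ‖u s‖ < 1 := by simpa [mem_ball, dist_eq_norm] using humem s hs
    have hden : (1:ℝ) - ‖u s‖^2 ≠ 0 := by nlinarith [norm_nonneg (u s)]
    have hid2 : (1/2) * ((w2 s)⁻¹ * d2 s)
        = (inner ℂ (u s) (f (u s)) : ℂ).re / (1 - ‖u s‖^2) := by
      simp only [hw2_def, hd2_def]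
      rw [hnormu s hs]
      field_simp
    have hrhs : ((inner ℂ (u s) (f (u s)) : ℂ) / (1 - (‖u s‖ : ℂ) ^ 2)).re
        = (inner ℂ (u s) (f (u s)) : ℂ).re / (1 - ‖u s‖^2) := by
      rw [show (1:ℂ) - (‖u s‖ : ℂ)^2 = ((1 - ‖u s‖^2 : ℝ) : ℂ) by push_cast; ring,
        Complex.div_ofReal_re]
    simp only [hD_def]
    rw [hid1, hid2]
    have : (A s / a s).re ≤ (inner ℂ (u s) (f (u s)) : ℂ).re / (1 - ‖u s‖^2) - α/2 := by
      rw [← hrhs]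
      exact hkey
    linarith
  -- antitone argument
  set Ψ : ℝ → ℝ := fun s => Φ s + (α/2) * s with hΨ_def
  have hΨd : ∀ s ∈ Set.Icc (0:ℝ) t, HasDerivWithinAt Ψ (D s + α/2) (Set.Icc 0 t) s := by
    intro s hs
    have h2 : HasDerivWithinAt (fun s : ℝ => (α/2) * s) (α/2) (Set.Icc 0 t) s := by
      simpa using (hasDerivWithinAt_id s (Set.Icc 0 t)).const_mul (α/2)
    exact (hΦd s hs).add h2
  have hanti : AntitoneOn Ψ (Set.Icc 0 t) := by
    apply antitoneOn_of_hasDerivWithinAt_nonpos (convex_Icc 0 t)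
      (fun s hs => (hΨd s hs).continuousWithinAt) (f' := fun s => D s + α/2)
    · intro s hs
      have hs' : s ∈ Set.Icc (0:ℝ) t := interior_subset hs
      exact (hΨd s hs').mono interior_subset
    · intro s hs
      have hs' : s ∈ Set.Icc (0:ℝ) t := interior_subset hs
      have := hDle s hs'
      linarith
  have h0m : (0:ℝ) ∈ Set.Icc (0:ℝ) t := ⟨le_refl _, le_of_lt ht⟩
  have htm : t ∈ Set.Icc (0:ℝ) t := ⟨le_of_lt ht, le_refl _⟩
  have hmono2 := hanti h0m htm (le_of_lt ht)
  have hΦeq : Φ t = Φ 0 := by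
    have huu : u t = u 0 := by rw [hx0, hxt]
    simp only [hΦ_def, hw1_def, hw2_def, ha_def, huu]
  simp only [hΨ_def] at hmono2
  rw [hΦeq] at hmono2
  nlinarith
end
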